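/- arXiv:1607.07516 — 3 statements merged into one kernel-verified Lean document; each statement's English description precedes it below -/
import Mathlib

section
/- For every n ∈ ℕ and every ε ∈ [0, 1/2), every private-coin SMP protocol Π computing the equality function EQ_n with worst-case error at most ε satisfies CC_priv(Π) = ⌈log₂|M_A|⌉ + ⌈log₂|M_B|⌉ ≥ 2·√(g₃(ε))·√n − g₃(ε) − 6, where g₃(x) = 2·(1/2 − x)²·log₂ e. -/
open scoped BigOperators
open scoped Classical

noncomputable section

/-- A probability distribution on a finite type. -/
structure FinDist (Ω : Type) [Fintype Ω] where
  prob : Ω → ℝ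
  nonneg : ∀ ω, 0 ≤ prob ω
  sum_one : ∑ ω, prob ω = 1

namespace FinDist

variable {Ω Ω' : Type} [Fintype Ω] [Fintype Ω']

/-- Product of two distributions (independent draw). -/
def prod (p : FinDist Ω) (q : FinDist Ω') : FinDist (Ω × Ω') where
  prob := fun ω => p.prob ω.1 * q.prob ω.2
  nonneg := fun ω => mul_nonneg (p.nonneg _) (q.nonneg _)
  sum_one := by
    rw [Fintype.sum_prod_type]
    have h : ∀ a : Ω, ∑ b : Ω', p.prob a * q.prob b = p.prob a := by
      intro a; rw [← Finset.mul_sum, q.sum_one, mul_one]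
    simp_rw [h]
    exact p.sum_one

/-- Probability of an event. -/
def probEvent (p : FinDist Ω) (E : Ω → Prop) : ℝ :=
  ∑ ω, if E ω then p.prob ω else 0

/-- Probability that a random variable takes a given value. -/
def probVal {α : Type*} (p : FinDist Ω) (A : Ω → α) (a : α) : ℝ :=
  probEvent p (fun ω => A ω = a)

/-- Shannon entropy (in bits) of a random variable on a finite probability space. -/
def entropy {α : Type*} (p : FinDist Ω) (A : Ω → α) : ℝ :=
  ∑ a ∈ Finset.univ.image A, -(probVal p A a * Real.logb 2 (probVal p A a))

/-- Mutual information (in bits) I(A;B). -/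
def mutualInfo {α β : Type*} (p : FinDist Ω) (A : Ω → α) (B : Ω → β) : ℝ :=
  entropy p A + entropy p B - entropy p (fun ω => (A ω, B ω))

/-- Conditional mutual information (in bits) I(A;B|C). -/
def condMutualInfo {α β γ : Type*} (p : FinDist Ω) (A : Ω → α) (B : Ω → β) (C : Ω → γ) : ℝ :=
  entropy p (fun ω => (A ω, C ω)) + entropy p (fun ω => (B ω, C ω))
    - entropy p (fun ω => (A ω, B ω, C ω)) - entropy p C

/-- Independence of two random variables. -/
def Indep {α β : Type*} (p : FinDist Ω) (A : Ω → α) (B : Ω → β) : Prop :=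
  ∀ a b, probEvent p (fun ω => A ω = a ∧ B ω = b) = probVal p A a * probVal p B b

end FinDist

/-- log₂(e). -/
def log2e : ℝ := Real.logb 2 (Real.exp 1)

def g1 (x : ℝ) : ℝ := 2 * Real.logb 2 (x + 1) + 10

def g2 (x y z : ℝ) : ℝ := 2 * Real.logb 2 (2 * (x + y) / (z ^ 2 * log2e) + 1) + 2

def g3 (x : ℝ) : ℝ := 2 * (1 / 2 - x) ^ 2 * log2e

/-- A private-coin SMP protocol for computing functions f : X × Y → Z. -/
structure PrivSMP (X Y Z : Type) [Fintype X] [Fintype Y] [Fintype Z] where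
  MA : Type
  MB : Type
  RA : Type
  RB : Type
  RC : Type
  [fMA : Fintype MA]
  [fMB : Fintype MB]
  [fRA : Fintype RA]
  [fRB : Fintype RB]
  [fRC : Fintype RC]
  [neMA : Nonempty MA]
  [neMB : Nonempty MB]
  [neRA : Nonempty RA]
  [neRB : Nonempty RB]
  [neRC : Nonempty RC]
  dRA : FinDist RA
  dRB : FinDist RB
  dRC : FinDist RC
  pA : X → RA → MA
  pB : Y → RB → MB
  pC : MA → MB → RC → Z

attribute [instance] PrivSMP.fMA PrivSMP.fMB PrivSMP.fRA PrivSMP.fRB PrivSMP.fRC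
attribute [instance] PrivSMP.neMA PrivSMP.neMB PrivSMP.neRA PrivSMP.neRB PrivSMP.neRC

namespace PrivSMP

variable {X Y Z : Type} [Fintype X] [Fintype Y] [Fintype Z]

/-- Joint distribution of all the (independent) randomness of the protocol,
ordered as (r_A, r_B, r_C). -/
def randDist (P : PrivSMP X Y Z) : FinDist (P.RA × P.RB × P.RC) :=
  P.dRA.prod (P.dRB.prod P.dRC)

/-- Probability of error on input (x, y). -/
def err (P : PrivSMP X Y Z) (f : X → Y → Z) (x : X) (y : Y) : ℝ :=
  FinDist.probEvent P.randDist (fun r => P.pC (P.pA x r.1) (P.pB y r.2.1) r.2.2 ≠ f x y)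

/-- The protocol computes f with worst-case error at most ε. -/
def Computes (P : PrivSMP X Y Z) (f : X → Y → Z) (ε : ℝ) : Prop :=
  ∀ x y, P.err f x y ≤ ε

/-- Communication cost ⌈log₂|M_A|⌉ + ⌈log₂|M_B|⌉. -/
def CC (P : PrivSMP X Y Z) : ℝ :=
  (⌈Real.logb 2 (Fintype.card P.MA)⌉ : ℝ) + (⌈Real.logb 2 (Fintype.card P.MB)⌉ : ℝ)

end PrivSMP

/-- Private-coin communication complexity of f with error ε. -/
def CCprivf {X Y Z : Type} [Fintype X] [Fintype Y] [Fintype Z]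
    (f : X → Y → Z) (ε : ℝ) : ℝ :=
  sInf {c : ℝ | ∃ P : PrivSMP X Y Z, P.Computes f ε ∧ P.CC = c}

/-- A shared-randomness SMP protocol for computing functions f : X × Y → Z. -/
structure ShSMP (X Y Z : Type) [Fintype X] [Fintype Y] [Fintype Z] where
  MA : Type
  MB : Type
  RA : Type
  RB : Type
  RC : Type
  RAC : Type
  RBC : Type
  [fMA : Fintype MA]
  [fMB : Fintype MB]
  [fRA : Fintype RA]
  [fRB : Fintype RB]
  [fRC : Fintype RC]
  [fRAC : Fintype RAC]
  [fRBC : Fintype RBC]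
  [neMA : Nonempty MA]
  [neMB : Nonempty MB]
  [neRA : Nonempty RA]
  [neRB : Nonempty RB]
  [neRC : Nonempty RC]
  [neRAC : Nonempty RAC]
  [neRBC : Nonempty RBC]
  dRA : FinDist RA
  dRB : FinDist RB
  dRC : FinDist RC
  dRAC : FinDist RAC
  dRBC : FinDist RBC
  pA : X → RA → RAC → MA
  pB : Y → RB → RBC → MB
  pC : MA → MB → RC → RAC → RBC → Z

attribute [instance] ShSMP.fMA ShSMP.fMB ShSMP.fRA ShSMP.fRB ShSMP.fRC ShSMP.fRAC ShSMP.fRBC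
attribute [instance] ShSMP.neMA ShSMP.neMB ShSMP.neRA ShSMP.neRB ShSMP.neRC ShSMP.neRAC
  ShSMP.neRBC

namespace ShSMP

variable {X Y Z : Type} [Fintype X] [Fintype Y] [Fintype Z]

/-- Joint distribution of all the (independent) randomness of the protocol,
ordered as (r_A, r_B, r_C, r_AC, r_BC). -/
def randDist (P : ShSMP X Y Z) : FinDist (P.RA × P.RB × P.RC × P.RAC × P.RBC) :=
  P.dRA.prod (P.dRB.prod (P.dRC.prod (P.dRAC.prod P.dRBC)))

/-- Probability of error on input (x, y). -/
def err (P : ShSMP X Y Z) (f : X → Y → Z) (x : X) (y : Y) : ℝ :=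
  FinDist.probEvent P.randDist
    (fun r => P.pC (P.pA x r.1 r.2.2.2.1) (P.pB y r.2.1 r.2.2.2.2) r.2.2.1 r.2.2.2.1 r.2.2.2.2
      ≠ f x y)

/-- The protocol computes f with worst-case error at most ε. -/
def Computes (P : ShSMP X Y Z) (f : X → Y → Z) (ε : ℝ) : Prop :=
  ∀ x y, P.err f x y ≤ ε

/-- Communication cost ⌈log₂|M_A|⌉ + ⌈log₂|M_B|⌉. -/
def CC (P : ShSMP X Y Z) : ℝ :=
  (⌈Real.logb 2 (Fintype.card P.MA)⌉ : ℝ) + (⌈Real.logb 2 (Fintype.card P.MB)⌉ : ℝ)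

/-- The underlying probability space when the input pair is drawn from μ, independently
of all the randomness of the protocol. A sample point is
((x, y), (r_A, r_B, r_C, r_AC, r_BC)). -/
def space (P : ShSMP X Y Z) (μ : FinDist (X × Y)) :
    FinDist ((X × Y) × (P.RA × P.RB × P.RC × P.RAC × P.RBC)) :=
  μ.prod P.randDist

/-- Alice's message as a random variable. -/
def rvMA (P : ShSMP X Y Z) (ω : (X × Y) × (P.RA × P.RB × P.RC × P.RAC × P.RBC)) : P.MA :=
  P.pA ω.1.1 ω.2.1 ω.2.2.2.2.1

/-- Bob's message as a random variable. -/
def rvMB (P : ShSMP X Y Z) (ω : (X × Y) × (P.RA × P.RB × P.RC × P.RAC × P.RBC)) : P.MB :=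
  P.pB ω.1.2 ω.2.2.1 ω.2.2.2.2.2

/-- The referee's private randomness as a random variable. -/
def rvRC (P : ShSMP X Y Z) (ω : (X × Y) × (P.RA × P.RB × P.RC × P.RAC × P.RBC)) : P.RC :=
  ω.2.2.2.1

/-- The Alice–referee shared randomness as a random variable. -/
def rvRAC (P : ShSMP X Y Z) (ω : (X × Y) × (P.RA × P.RB × P.RC × P.RAC × P.RBC)) : P.RAC :=
  ω.2.2.2.2.1

/-- The Bob–referee shared randomness as a random variable. -/
def rvRBC (P : ShSMP X Y Z) (ω : (X × Y) × (P.RA × P.RB × P.RC × P.RAC × P.RBC)) : P.RBC :=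
  ω.2.2.2.2.2

/-- Information leakage of the protocol on input distribution μ :
IL(Π,μ) = I(XY ; M_A M_B R_C R_AC R_BC). -/
def IL (P : ShSMP X Y Z) (μ : FinDist (X × Y)) : ℝ :=
  FinDist.mutualInfo (P.space μ) (fun ω => ω.1)
    (fun ω => (P.rvMA ω, P.rvMB ω, P.rvRC ω, P.rvRAC ω, P.rvRBC ω))

/-- Worst-case (over input distributions) information leakage IL(Π). -/
def ILmax (P : ShSMP X Y Z) : ℝ :=
  ⨆ μ : FinDist (X × Y), P.IL μ

/-- Information complexity of the protocol on input distribution μ :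
IC(Π,μ) = I(X ; M_A | R_AC) + I(Y ; M_B | R_BC). -/
def IC (P : ShSMP X Y Z) (μ : FinDist (X × Y)) : ℝ :=
  FinDist.condMutualInfo (P.space μ) (fun ω => ω.1.1) (fun ω => P.rvMA ω) (fun ω => P.rvRAC ω)
    + FinDist.condMutualInfo (P.space μ) (fun ω => ω.1.2) (fun ω => P.rvMB ω)
      (fun ω => P.rvRBC ω)

/-- Worst-case (over input distributions) information complexity IC(Π). -/
def ICmax (P : ShSMP X Y Z) : ℝ :=
  ⨆ μ : FinDist (X × Y), P.IC μ

end ShSMP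

/-- Shared-randomness communication complexity of f with error ε. -/
def CCshf {X Y Z : Type} [Fintype X] [Fintype Y] [Fintype Z]
    (f : X → Y → Z) (ε : ℝ) : ℝ :=
  sInf {c : ℝ | ∃ P : ShSMP X Y Z, P.Computes f ε ∧ P.CC = c}

/-- Information leakage for computing f with error ε. -/
def ILf {X Y Z : Type} [Fintype X] [Fintype Y] [Fintype Z]
    (f : X → Y → Z) (ε : ℝ) : ℝ :=
  sInf {c : ℝ | ∃ P : ShSMP X Y Z, P.Computes f ε ∧ P.ILmax = c}

/-- Information complexity for computing f with error ε. -/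
def ICf {X Y Z : Type} [Fintype X] [Fintype Y] [Fintype Z]
    (f : X → Y → Z) (ε : ℝ) : ℝ :=
  sInf {c : ℝ | ∃ P : ShSMP X Y Z, P.Computes f ε ∧ P.ICmax = c}

/-- An average-length SMP protocol: a shared-randomness SMP protocol whose (countable)
message sets carry length functions satisfying Kraft's inequality. -/
structure AvgSMP (X Y Z : Type) [Fintype X] [Fintype Y] [Fintype Z] where
  MA : Type
  MB : Type
  RA : Type
  RB : Type
  RC : Type
  RAC : Type
  RBC : Type
  [cMA : Countable MA]
  [cMB : Countable MB]
  [neMA : Nonempty MA]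
  [neMB : Nonempty MB]
  [fRA : Fintype RA]
  [fRB : Fintype RB]
  [fRC : Fintype RC]
  [fRAC : Fintype RAC]
  [fRBC : Fintype RBC]
  [neRA : Nonempty RA]
  [neRB : Nonempty RB]
  [neRC : Nonempty RC]
  [neRAC : Nonempty RAC]
  [neRBC : Nonempty RBC]
  lA : MA → ℕ
  lB : MB → ℕ
  kraftA : ∑' m : MA, ((2 : ℝ) ^ lA m)⁻¹ ≤ 1
  kraftB : ∑' m : MB, ((2 : ℝ) ^ lB m)⁻¹ ≤ 1
  dRA : FinDist RA
  dRB : FinDist RB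
  dRC : FinDist RC
  dRAC : FinDist RAC
  dRBC : FinDist RBC
  pA : X → RA → RAC → MA
  pB : Y → RB → RBC → MB
  pC : MA → MB → RC → RAC → RBC → Z

attribute [instance] AvgSMP.cMA AvgSMP.cMB AvgSMP.neMA AvgSMP.neMB
attribute [instance] AvgSMP.fRA AvgSMP.fRB AvgSMP.fRC AvgSMP.fRAC AvgSMP.fRBC
attribute [instance] AvgSMP.neRA AvgSMP.neRB AvgSMP.neRC AvgSMP.neRAC AvgSMP.neRBC

namespace AvgSMP

variable {X Y Z : Type} [Fintype X] [Fintype Y] [Fintype Z]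

/-- Joint distribution of all the (independent) randomness of the protocol,
ordered as (r_A, r_B, r_C, r_AC, r_BC). -/
def randDist (P : AvgSMP X Y Z) : FinDist (P.RA × P.RB × P.RC × P.RAC × P.RBC) :=
  P.dRA.prod (P.dRB.prod (P.dRC.prod (P.dRAC.prod P.dRBC)))

/-- Probability of error on input (x, y). -/
def err (P : AvgSMP X Y Z) (f : X → Y → Z) (x : X) (y : Y) : ℝ :=
  FinDist.probEvent P.randDist
    (fun r => P.pC (P.pA x r.1 r.2.2.2.1) (P.pB y r.2.1 r.2.2.2.2) r.2.2.1 r.2.2.2.1 r.2.2.2.2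
      ≠ f x y)

/-- The protocol computes f with worst-case error at most ε. -/
def Computes (P : AvgSMP X Y Z) (f : X → Y → Z) (ε : ℝ) : Prop :=
  ∀ x y, P.err f x y ≤ ε

/-- Average communication cost on input (x, y): E[ℓ_A(M_A) + ℓ_B(M_B)]. -/
def CCavOn (P : AvgSMP X Y Z) (x : X) (y : Y) : ℝ :=
  ∑ r : P.RA × P.RB × P.RC × P.RAC × P.RBC, P.randDist.prob r *
    ((P.lA (P.pA x r.1 r.2.2.2.1) : ℝ) + (P.lB (P.pB y r.2.1 r.2.2.2.2) : ℝ))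

/-- Average communication cost of the protocol (worst case over inputs). -/
def CCav (P : AvgSMP X Y Z) : ℝ :=
  ⨆ xy : X × Y, P.CCavOn xy.1 xy.2

/-- The underlying probability space when the input pair is drawn from μ. -/
def space (P : AvgSMP X Y Z) (μ : FinDist (X × Y)) :
    FinDist ((X × Y) × (P.RA × P.RB × P.RC × P.RAC × P.RBC)) :=
  μ.prod P.randDist

/-- Information complexity of the protocol on input distribution μ :
IC(Π,μ) = I(X ; M_A | R_AC) + I(Y ; M_B | R_BC). -/
def IC (P : AvgSMP X Y Z) (μ : FinDist (X × Y)) : ℝ :=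
  FinDist.condMutualInfo (P.space μ) (fun ω => ω.1.1)
      (fun ω => P.pA ω.1.1 ω.2.1 ω.2.2.2.2.1) (fun ω => ω.2.2.2.2.1)
    + FinDist.condMutualInfo (P.space μ) (fun ω => ω.1.2)
      (fun ω => P.pB ω.1.2 ω.2.2.1 ω.2.2.2.2.2) (fun ω => ω.2.2.2.2.2)

/-- Worst-case (over input distributions) information complexity. -/
def ICmax (P : AvgSMP X Y Z) : ℝ :=
  ⨆ μ : FinDist (X × Y), P.IC μ

end AvgSMP

/-- Average-length communication complexity of f with error ε. -/
def CCavf {X Y Z : Type} [Fintype X] [Fintype Y] [Fintype Z]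
    (f : X → Y → Z) (ε : ℝ) : ℝ :=
  sInf {c : ℝ | ∃ P : AvgSMP X Y Z, P.Computes f ε ∧ P.CCav = c}

/-- The equality function on n-bit strings. -/
def EQfun (n : ℕ) : (Fin n → Bool) → (Fin n → Bool) → Bool :=
  fun x y => decide (x = y)

end
open Real

private lemma hoeff_ptwise {p t : ℝ} (hp0 : 0 ≤ p) (hp1 : p ≤ 1) (ht : 0 ≤ t) :
    1 - p + p * Real.exp t ≤ Real.exp (p * t + t ^ 2 / 8) := by
  set g : ℝ → ℝ := fun s => 1 - p + p * Real.exp s with hg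
  have hgpos : ∀ s, 0 ≤ s → 0 < g s := by
    intro s hs
    have h1 : 1 ≤ Real.exp s := Real.one_le_exp hs
    have : 1 - p + p * 1 ≤ g s := by
      have := mul_le_mul_of_nonneg_left h1 hp0
      simp only [hg]; nlinarith
    nlinarith
  have hgd : ∀ s, HasDerivAt g (p * Real.exp s) s := by
    intro s
    exact ((Real.hasDerivAt_exp s).const_mul p).const_add (1 - p)
  set ψ : ℝ → ℝ := fun s => p + s / 4 - p * Real.exp s / g s with hψ
  have hψd : ∀ s, 0 ≤ s → HasDerivAt ψ
      (1 / 4 - p * (1 - p) * Real.exp s / (g s) ^ 2) s := by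
    intro s hs
    have hgs := (hgpos s hs).ne'
    have h1 : HasDerivAt (fun u => p + u / 4) (1 / 4) s := by
      simpa using ((hasDerivAt_id s).div_const 4).const_add p
    have h2 : HasDerivAt (fun u => p * Real.exp u / g u)
        ((p * Real.exp s * g s - p * Real.exp s * (p * Real.exp s)) / (g s) ^ 2) s :=
      ((Real.hasDerivAt_exp s).const_mul p).div (hgd s) hgs
    have := h1.sub h2
    refine this.congr_deriv ?_
    have hgg : g s - p * Real.exp s = 1 - p := by simp [hg]
    rw [← hgg]
    ring
  -- ψ is monotone on [0,∞), ψ 0 = 0, hence ψ ≥ 0 there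
  have hψmono : MonotoneOn ψ (Set.Ici (0:ℝ)) := by
    apply monotoneOn_of_deriv_nonneg (convex_Ici 0)
    · intro s hs
      exact (hψd s hs).continuousAt.continuousWithinAt
    · intro s hs
      rw [interior_Ici] at hs
      exact (hψd s hs.le).differentiableAt.differentiableWithinAt
    · intro s hs
      rw [interior_Ici] at hs
      rw [(hψd s hs.le).deriv]
      have hgs := hgpos s hs.le
      have hA : (0:ℝ) ≤ 1 - p := by linarith
      have hB : (0:ℝ) ≤ p * Real.exp s := mul_nonneg hp0 (Real.exp_pos s).le
      have hkey : 4 * ((1 - p) * (p * Real.exp s)) ≤ (g s) ^ 2 := by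
        have : g s = (1 - p) + p * Real.exp s := by simp [hg]
        nlinarith [sq_nonneg ((1 - p) - p * Real.exp s)]
      rw [sub_nonneg, div_le_iff₀ (by positivity)]
      ring_nf at hkey ⊢
      linarith
  have hψ0 : ψ 0 = 0 := by simp [hψ, hg]
  have hψnn : ∀ s, 0 ≤ s → 0 ≤ ψ s := by
    intro s hs
    have := hψmono (Set.self_mem_Ici) (Set.mem_Ici.2 hs) hs
    rwa [hψ0] at this
  -- φ := p t + t²/8 - log (g t) is monotone on [0,∞) since φ' = ψ ≥ 0
  set φ : ℝ → ℝ := fun s => p * s + s ^ 2 / 8 - Real.log (g s) with hφ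
  have hφd : ∀ s, 0 ≤ s → HasDerivAt φ (ψ s) s := by
    intro s hs
    have hgs := (hgpos s hs).ne'
    have h1 : HasDerivAt (fun u => p * u + u ^ 2 / 8) (p + s / 4) s := by
      have := ((hasDerivAt_id s).const_mul p).add ((hasDerivAt_pow 2 s).div_const 8)
      refine this.congr_deriv ?_
      norm_num
      ring
    have h2 : HasDerivAt (fun u => Real.log (g u)) (p * Real.exp s / g s) s :=
      (hgd s).log hgs
    exact h1.sub h2
  have hφmono : MonotoneOn φ (Set.Ici (0:ℝ)) := by
    apply monotoneOn_of_deriv_nonneg (convex_Ici 0)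
    · intro s hs
      exact (hφd s hs).continuousAt.continuousWithinAt
    · intro s hs
      rw [interior_Ici] at hs
      exact (hφd s hs.le).differentiableAt.differentiableWithinAt
    · intro s hs
      rw [interior_Ici] at hs
      rw [(hφd s hs.le).deriv]
      exact hψnn s hs.le
  have hφ0 : φ 0 = 0 := by simp [hφ, hg]
  have hφt : 0 ≤ φ t := by
    have := hφmono (Set.self_mem_Ici) (Set.mem_Ici.2 ht) ht
    rwa [hφ0] at this
  have hlog : Real.log (g t) ≤ p * t + t ^ 2 / 8 := by
    simp only [hφ] at hφt; linarith
  calc g t = Real.exp (Real.log (g t)) := (Real.exp_log (hgpos t ht)).symm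
    _ ≤ Real.exp (p * t + t ^ 2 / 8) := Real.exp_le_exp.2 hlog
noncomputable section
section Aux

namespace FinDist

variable {Ω : Type} [Fintype Ω]

lemma probEvent_nonneg (p : FinDist Ω) (E : Ω → Prop) : 0 ≤ p.probEvent E :=
  Finset.sum_nonneg fun ω _ => by
    by_cases h : E ω <;> simp [probEvent, h, p.nonneg ω]

lemma probEvent_le_one (p : FinDist Ω) (E : Ω → Prop) : p.probEvent E ≤ 1 := by
  rw [← p.sum_one]
  refine Finset.sum_le_sum fun ω _ => ?_
  by_cases h : E ω <;> simp [h, p.nonneg ω]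

lemma probEvent_union_le {ι : Type*} [Fintype ι] (p : FinDist Ω) (E : ι → Ω → Prop) :
    p.probEvent (fun ω => ∃ i, E i ω) ≤ ∑ i, p.probEvent (E i) := by
  simp only [probEvent]
  rw [Finset.sum_comm]
  refine Finset.sum_le_sum fun ω _ => ?_
  by_cases h : ∃ i, E i ω
  · rw [if_pos h]
    obtain ⟨i, hi⟩ := h
    have heq : p.prob ω = (if E i ω then p.prob ω else 0) := by simp [hi]
    exact heq.le.trans <| Finset.single_le_sum (f := fun j => if E j ω then p.prob ω else 0)
      (fun j _ => by by_cases hj : E j ω <;> simp [hj, p.nonneg ω]) (Finset.mem_univ i)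
  · rw [if_neg h]
    exact Finset.sum_nonneg fun j _ => by by_cases hj : E j ω <;> simp [hj, p.nonneg ω]

lemma exists_not_of_probEvent_lt_one (p : FinDist Ω) (E : Ω → Prop)
    (h : p.probEvent E < 1) : ∃ ω, ¬ E ω := by
  by_contra h'
  push_neg at h'
  have : p.probEvent E = 1 := by
    rw [← p.sum_one]
    exact Finset.sum_congr rfl fun ω _ => by simp [h' ω]
  linarith

lemma sum_probVal_mul {α : Type*} [Fintype α] (p : FinDist Ω) (A : Ω → α) (g : α → ℝ) :
    ∑ a, p.probVal A a * g a = ∑ ω, p.prob ω * g (A ω) := by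
  simp only [probVal, probEvent, Finset.sum_mul]
  rw [Finset.sum_comm]
  refine Finset.sum_congr rfl fun ω _ => ?_
  have h : ∀ a, (if A ω = a then p.prob ω else 0) * g a
      = if A ω = a then p.prob ω * g (A ω) else 0 := by
    intro a; by_cases h : A ω = a
    · subst h; simp
    · simp [h]
  simp only [h, Finset.sum_ite_eq, Finset.mem_univ, if_true]

lemma probVal_nonneg {α : Type*} [Fintype α] (p : FinDist Ω) (A : Ω → α) (a : α) :
    0 ≤ p.probVal A a := probEvent_nonneg _ _

lemma sum_probVal {α : Type*} [Fintype α] (p : FinDist Ω) (A : Ω → α) :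
    ∑ a, p.probVal A a = 1 := by
  have := sum_probVal_mul p A (fun _ => (1:ℝ))
  simpa [p.sum_one] using this

/-- k-fold iid product of a distribution. -/
def piDist (p : FinDist Ω) (k : ℕ) : FinDist (Fin k → Ω) where
  prob := fun T => ∏ i, p.prob (T i)
  nonneg := fun T => Finset.prod_nonneg fun i _ => p.nonneg _
  sum_one := by
    have h := Finset.prod_univ_sum (fun _ : Fin k => (Finset.univ : Finset Ω))
      (fun _ ω => p.prob ω)
    rw [Fintype.piFinset_univ] at h
    rw [← h]
    simp [p.sum_one]

lemma piDist_sum_prod (p : FinDist Ω) (k : ℕ) (h : Ω → ℝ) :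
    ∑ T : Fin k → Ω, ∏ i, h (T i) = (∑ ω, h ω) ^ k := by
  have hh := Finset.prod_univ_sum (fun _ : Fin k => (Finset.univ : Finset Ω))
    (fun _ ω => h ω)
  rw [Fintype.piFinset_univ] at hh
  rw [← hh]
  simp

end FinDist

end Aux
namespace FinDist

variable {Ω : Type} [Fintype Ω]

lemma probEvent_congr {p : FinDist Ω} {E F : Ω → Prop} (h : ∀ ω, E ω ↔ F ω) :
    p.probEvent E = p.probEvent F :=
  Finset.sum_congr rfl fun ω _ => by simp [h ω]

lemma mgf_le (p : FinDist Ω) (f : Ω → ℝ) (hf0 : ∀ ω, 0 ≤ f ω) (hf1 : ∀ ω, f ω ≤ 1)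
    {t : ℝ} (ht : 0 ≤ t) :
    ∑ ω, p.prob ω * Real.exp (t * f ω)
      ≤ Real.exp (t * (∑ ω, p.prob ω * f ω) + t ^ 2 / 8) := by
  set μ := ∑ ω, p.prob ω * f ω with hμ
  have hμ0 : 0 ≤ μ := Finset.sum_nonneg fun ω _ => mul_nonneg (p.nonneg ω) (hf0 ω)
  have hμ1 : μ ≤ 1 := by
    rw [← p.sum_one]
    exact Finset.sum_le_sum fun ω _ => by
      nlinarith [p.nonneg ω, hf0 ω, hf1 ω]
  have hpt : ∀ ω, Real.exp (t * f ω) ≤ 1 - f ω + f ω * Real.exp t := by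
    intro ω
    have h0 : (0:ℝ) ≤ 1 - f ω := by linarith [hf1 ω]
    have := convexOn_exp.2 (Set.mem_univ (0:ℝ)) (Set.mem_univ t) h0 (hf0 ω) (by ring)
    simpa [mul_comm] using this
  calc ∑ ω, p.prob ω * Real.exp (t * f ω)
      ≤ ∑ ω, p.prob ω * (1 - f ω + f ω * Real.exp t) :=
        Finset.sum_le_sum fun ω _ => mul_le_mul_of_nonneg_left (hpt ω) (p.nonneg ω)
    _ = 1 - μ + μ * Real.exp t := by
        simp only [mul_add, mul_sub, mul_one, ← mul_assoc]
        rw [Finset.sum_add_distrib, Finset.sum_sub_distrib, p.sum_one, ← Finset.sum_mul]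
    _ ≤ Real.exp (μ * t + t ^ 2 / 8) := hoeff_ptwise hμ0 hμ1 ht
    _ = Real.exp (t * μ + t ^ 2 / 8) := by rw [mul_comm μ t]

lemma chernoff_upper (p : FinDist Ω) (f : Ω → ℝ) (hf0 : ∀ ω, 0 ≤ f ω)
    (hf1 : ∀ ω, f ω ≤ 1) (k : ℕ) {δ : ℝ} (hδ : 0 ≤ δ) :
    (p.piDist k).probEvent
        (fun T => ((∑ ω, p.prob ω * f ω) + δ) * k ≤ ∑ i, f (T i))
      ≤ Real.exp (-(2 * k * δ ^ 2)) := by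
  set μ := ∑ ω, p.prob ω * f ω with hμ
  set t : ℝ := 4 * δ with htdef
  have ht : 0 ≤ t := by positivity
  set c : ℝ := (μ + δ) * k with hc
  set S : (Fin k → Ω) → ℝ := fun T => ∑ i, f (T i) with hS
  have step1 : (p.piDist k).probEvent (fun T => c ≤ S T)
      ≤ ∑ T : Fin k → Ω, (p.piDist k).prob T * Real.exp (t * (S T - c)) := by
    refine Finset.sum_le_sum fun T _ => ?_
    by_cases h : c ≤ S T
    · rw [if_pos h]
      refine le_mul_of_one_le_right ((p.piDist k).nonneg T) ?_
      rw [← Real.exp_zero]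
      exact Real.exp_le_exp.2 (by nlinarith)
    · rw [if_neg h]
      exact mul_nonneg ((p.piDist k).nonneg T) (Real.exp_pos _).le
  have step2 : ∀ T : Fin k → Ω, (p.piDist k).prob T * Real.exp (t * (S T - c))
      = Real.exp (-(t * c)) * ∏ i, (p.prob (T i) * Real.exp (t * f (T i))) := by
    intro T
    have h1 : Real.exp (t * (S T - c)) = Real.exp (-(t*c)) * ∏ i, Real.exp (t * f (T i)) := by
      rw [← Real.exp_sum, ← Real.exp_add, ← Finset.mul_sum]
      congr 1
      simp only [hS]
      ring
    rw [h1, Finset.prod_mul_distrib]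
    simp only [piDist]
    ring
  have step3 : ∑ T : Fin k → Ω, ∏ i, (p.prob (T i) * Real.exp (t * f (T i)))
      ≤ Real.exp (t * μ + t ^ 2 / 8) ^ k := by
    refine le_trans (le_of_eq (piDist_sum_prod p k fun ω => p.prob ω * Real.exp (t * f ω))) ?_
    exact pow_le_pow_left₀
      (Finset.sum_nonneg fun ω _ => mul_nonneg (p.nonneg ω) (Real.exp_pos _).le)
      (mgf_le p f hf0 hf1 ht) k
  calc (p.piDist k).probEvent (fun T => c ≤ S T)
      ≤ ∑ T : Fin k → Ω, (p.piDist k).prob T * Real.exp (t * (S T - c)) := step1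
    _ = Real.exp (-(t * c)) * ∑ T : Fin k → Ω, ∏ i, (p.prob (T i) * Real.exp (t * f (T i))) := by
        simp only [step2]
        rw [Finset.mul_sum]
    _ ≤ Real.exp (-(t * c)) * Real.exp (t * μ + t ^ 2 / 8) ^ k :=
        mul_le_mul_of_nonneg_left step3 (Real.exp_pos _).le
    _ = Real.exp (-(2 * k * δ ^ 2)) := by
        rw [← Real.exp_nat_mul, ← Real.exp_add]
        congr 1
        simp only [hc, htdef]
        ring

lemma chernoff_lower (p : FinDist Ω) (f : Ω → ℝ) (hf0 : ∀ ω, 0 ≤ f ω)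
    (hf1 : ∀ ω, f ω ≤ 1) (k : ℕ) {δ : ℝ} (hδ : 0 ≤ δ) :
    (p.piDist k).probEvent
        (fun T => ∑ i, f (T i) ≤ ((∑ ω, p.prob ω * f ω) - δ) * k)
      ≤ Real.exp (-(2 * k * δ ^ 2)) := by
  have h := chernoff_upper p (fun ω => 1 - f ω)
    (fun ω => by linarith [hf1 ω]) (fun ω => by linarith [hf0 ω]) k hδ
  refine le_trans (le_of_eq (probEvent_congr fun T => ?_)) h
  have h1 : ∑ ω, p.prob ω * (1 - f ω) = 1 - ∑ ω, p.prob ω * f ω := by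
    simp only [mul_sub, mul_one]
    rw [Finset.sum_sub_distrib, p.sum_one]
  have h2 : ∑ i, (1 - f (T i)) = (k : ℝ) - ∑ i, f (T i) := by
    rw [Finset.sum_sub_distrib]
    simp
  rw [h1, h2]
  constructor <;> intro hh <;> nlinarith

end FinDist
namespace FinDist

variable {Ω : Type} [Fintype Ω]

lemma probEvent_not (p : FinDist Ω) (E : Ω → Prop) :
    p.probEvent (fun ω => ¬ E ω) = 1 - p.probEvent E := by
  rw [← p.sum_one, probEvent, probEvent, ← Finset.sum_sub_distrib]
  refine Finset.sum_congr rfl fun ω _ => ?_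
  by_cases h : E ω <;> simp [h]

lemma probEvent_or_le (p : FinDist Ω) (E F : Ω → Prop) :
    p.probEvent (fun ω => E ω ∨ F ω) ≤ p.probEvent E + p.probEvent F := by
  simp only [probEvent, ← Finset.sum_add_distrib]
  refine Finset.sum_le_sum fun ω _ => ?_
  by_cases hE : E ω <;> by_cases hF : F ω <;> simp [hE, hF, p.nonneg ω]

lemma weighted_abs_lt {ι : Type*} [Fintype ι] [Nonempty ι] (w c : ι → ℝ)
    (hw0 : ∀ i, 0 ≤ w i) (hw1 : ∑ i, w i = 1) {D : ℝ} (hc : ∀ i, |c i| < D) :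
    |∑ i, w i * c i| < D := by
  set M : ℝ := Finset.univ.sup' Finset.univ_nonempty (fun i => |c i|) with hM
  obtain ⟨i0, -, hi0⟩ := Finset.exists_mem_eq_sup' Finset.univ_nonempty (fun i => |c i|)
  have hMD : M < D := by rw [hM, hi0]; exact hc i0
  calc |∑ i, w i * c i| ≤ ∑ i, |w i * c i| := Finset.abs_sum_le_sum_abs _ _
    _ ≤ ∑ i, w i * M := by
        refine Finset.sum_le_sum fun i _ => ?_
        rw [abs_mul, abs_of_nonneg (hw0 i)]
        exact mul_le_mul_of_nonneg_left
          (Finset.le_sup' (fun j => |c j|) (Finset.mem_univ i)) (hw0 i)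
    _ = M := by rw [← Finset.sum_mul, hw1, one_mul]
    _ < D := hMD

end FinDist

namespace PrivSMP

variable {X Y : Type} [Fintype X] [Fintype Y]

/-- Probability that the protocol outputs `true` on input (x, y). -/
def acc (P : PrivSMP X Y Bool) (x : X) (y : Y) : ℝ :=
  FinDist.probEvent P.randDist (fun r => P.pC (P.pA x r.1) (P.pB y r.2.1) r.2.2 = true)

/-- Probability the referee outputs `true` given messages. -/
def refAcc (P : PrivSMP X Y Bool) (mA : P.MA) (mB : P.MB) : ℝ :=
  FinDist.probEvent P.dRC (fun rC => P.pC mA mB rC = true)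

lemma refAcc_nonneg (P : PrivSMP X Y Bool) (mA : P.MA) (mB : P.MB) : 0 ≤ P.refAcc mA mB :=
  FinDist.probEvent_nonneg _ _

lemma refAcc_le_one (P : PrivSMP X Y Bool) (mA : P.MA) (mB : P.MB) : P.refAcc mA mB ≤ 1 :=
  FinDist.probEvent_le_one _ _

/-- Distribution of Alice's message on input x. -/
def distA (P : PrivSMP X Y Bool) (x : X) : FinDist P.MA where
  prob := fun mA => FinDist.probVal P.dRA (P.pA x) mA
  nonneg := fun mA => FinDist.probVal_nonneg _ _ _
  sum_one := FinDist.sum_probVal _ _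

/-- Distribution of Bob's message on input y. -/
def wB (P : PrivSMP X Y Bool) (y : Y) (mB : P.MB) : ℝ :=
  FinDist.probVal P.dRB (P.pB y) mB

lemma wB_nonneg (P : PrivSMP X Y Bool) (y : Y) (mB : P.MB) : 0 ≤ P.wB y mB :=
  FinDist.probVal_nonneg _ _ _

lemma wB_sum_one (P : PrivSMP X Y Bool) (y : Y) : ∑ mB, P.wB y mB = 1 :=
  FinDist.sum_probVal _ _

/-- Mean referee-acceptance against Alice's message distribution on x. -/
def Rbar (P : PrivSMP X Y Bool) (x : X) (mB : P.MB) : ℝ :=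
  ∑ mA, (P.distA x).prob mA * P.refAcc mA mB

lemma acc_eq (P : PrivSMP X Y Bool) (x : X) (y : Y) :
    P.acc x y = ∑ mB, P.wB y mB * P.Rbar x mB := by
  have expand : P.acc x y
      = ∑ rA, P.dRA.prob rA * ∑ rB, P.dRB.prob rB * P.refAcc (P.pA x rA) (P.pB y rB) := by
    simp only [acc, FinDist.probEvent, randDist, FinDist.prod, refAcc]
    rw [Fintype.sum_prod_type]
    refine Finset.sum_congr rfl fun rA _ => ?_
    rw [Fintype.sum_prod_type, Finset.mul_sum]
    refine Finset.sum_congr rfl fun rB _ => ?_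
    rw [Finset.mul_sum, Finset.mul_sum]
    refine Finset.sum_congr rfl fun rC _ => ?_
    by_cases h : P.pC (P.pA x rA) (P.pB y rB) rC = true <;> simp [h, mul_assoc]
  have stepB : ∀ mA : P.MA, ∑ rB, P.dRB.prob rB * P.refAcc mA (P.pB y rB)
      = ∑ mB, P.wB y mB * P.refAcc mA mB :=
    fun mA => (FinDist.sum_probVal_mul P.dRB (P.pB y) (fun mB => P.refAcc mA mB)).symm
  have stepA : ∑ rA, P.dRA.prob rA * ∑ mB, P.wB y mB * P.refAcc (P.pA x rA) mB
      = ∑ mA, (P.distA x).prob mA * ∑ mB, P.wB y mB * P.refAcc mA mB :=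
    (FinDist.sum_probVal_mul P.dRA (P.pA x)
      (fun mA => ∑ mB, P.wB y mB * P.refAcc mA mB)).symm
  rw [expand]
  simp only [stepB]
  rw [stepA]
  simp only [Rbar, Finset.mul_sum, Finset.sum_mul]
  rw [Finset.sum_comm]
  exact Finset.sum_congr rfl fun mA _ => Finset.sum_congr rfl fun mB _ => by ring

lemma chernoff_up (P : PrivSMP X Y Bool) (x : X) (mB : P.MB) (k : ℕ) {δ : ℝ} (hδ : 0 ≤ δ) :
    ((P.distA x).piDist k).probEvent
        (fun T => (P.Rbar x mB + δ) * k ≤ ∑ i, P.refAcc (T i) mB)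
      ≤ Real.exp (-(2 * k * δ ^ 2)) := by
  have h := FinDist.chernoff_upper (P.distA x) (fun mA => P.refAcc mA mB)
    (fun mA => P.refAcc_nonneg mA mB) (fun mA => P.refAcc_le_one mA mB) k hδ
  simpa only [Rbar] using h

lemma chernoff_lo (P : PrivSMP X Y Bool) (x : X) (mB : P.MB) (k : ℕ) {δ : ℝ} (hδ : 0 ≤ δ) :
    ((P.distA x).piDist k).probEvent
        (fun T => ∑ i, P.refAcc (T i) mB ≤ (P.Rbar x mB - δ) * k)
      ≤ Real.exp (-(2 * k * δ ^ 2)) := by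
  have h := FinDist.chernoff_lower (P.distA x) (fun mA => P.refAcc mA mB)
    (fun mA => P.refAcc_nonneg mA mB) (fun mA => P.refAcc_le_one mA mB) k hδ
  simpa only [Rbar] using h

end PrivSMP

set_option maxHeartbeats 1000000

/-- Lower bound on the private-coin communication cost of any SMP
protocol computing equality on n bits with worst-case error at most ε < 1/2. -/
theorem ccpriv_lower_bound_equality (n : ℕ) (ε : ℝ) (hε0 : 0 ≤ ε) (hε : ε < 1 / 2)
    (P : PrivSMP (Fin n → Bool) (Fin n → Bool) Bool) (hP : P.Computes (EQfun n) ε) :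
    P.CC ≥ 2 * Real.sqrt (g3 ε) * Real.sqrt n - g3 ε - 6 := by
  classical
  set δ : ℝ := 1 / 2 - ε with hδdef
  have hδpos : 0 < δ := by rw [hδdef]; linarith
  have hδhalf : δ ≤ 1 / 2 := by rw [hδdef]; linarith
  clear_value δ
  have hlog2pos : (0:ℝ) < Real.log 2 := Real.log_pos one_lt_two
  -- message count bounds
  have hcA1 : (1 : ℝ) ≤ (Fintype.card P.MA : ℝ) := by exact_mod_cast Fintype.card_pos
  have hcB1 : (1 : ℝ) ≤ (Fintype.card P.MB : ℝ) := by exact_mod_cast Fintype.card_pos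
  have hlogA0 : 0 ≤ Real.logb 2 (Fintype.card P.MA) := Real.logb_nonneg one_lt_two hcA1
  have hlogB0 : 0 ≤ Real.logb 2 (Fintype.card P.MB) := Real.logb_nonneg one_lt_two hcB1
  set aN : ℕ := (⌈Real.logb 2 (Fintype.card P.MA)⌉).toNat with haN
  set bN : ℕ := (⌈Real.logb 2 (Fintype.card P.MB)⌉).toNat with hbN
  have haR : ((⌈Real.logb 2 (Fintype.card P.MA)⌉ : ℤ) : ℝ) = (aN : ℝ) := by
    rw [haN]; exact_mod_cast (Int.toNat_of_nonneg (Int.ceil_nonneg hlogA0)).symm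
  have hbR : ((⌈Real.logb 2 (Fintype.card P.MB)⌉ : ℤ) : ℝ) = (bN : ℝ) := by
    rw [hbN]; exact_mod_cast (Int.toNat_of_nonneg (Int.ceil_nonneg hlogB0)).symm
  have hcardA : Fintype.card P.MA ≤ 2 ^ aN := by
    have h1 : Real.logb 2 (Fintype.card P.MA) ≤ (aN : ℝ) := by
      rw [← haR]; exact Int.le_ceil _
    have h2 : (Fintype.card P.MA : ℝ) ≤ (2:ℝ) ^ (aN : ℝ) :=
      (Real.logb_le_iff_le_rpow one_lt_two (by linarith)).1 h1
    rw [Real.rpow_natCast] at h2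
    exact_mod_cast h2
  have hcardB : Fintype.card P.MB ≤ 2 ^ bN := by
    have h1 : Real.logb 2 (Fintype.card P.MB) ≤ (bN : ℝ) := by
      rw [← hbR]; exact Int.le_ceil _
    have h2 : (Fintype.card P.MB : ℝ) ≤ (2:ℝ) ^ (bN : ℝ) :=
      (Real.logb_le_iff_le_rpow one_lt_two (by linarith)).1 h1
    rw [Real.rpow_natCast] at h2
    exact_mod_cast h2
  clear_value aN bN
  -- choice of k
  set k : ℕ := ⌊(((bN : ℝ) + 1) * Real.log 2) / (2 * δ ^ 2)⌋₊ + 1 with hkdef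
  have hkpos : 0 < k := Nat.succ_pos _
  have hkR : (((bN : ℝ) + 1) * Real.log 2) / (2 * δ ^ 2) < (k : ℝ) := by
    rw [hkdef]; push_cast; exact Nat.lt_floor_add_one _
  have hkle : (k : ℝ) ≤ (((bN : ℝ) + 1) * Real.log 2) / (2 * δ ^ 2) + 1 := by
    have h0 : (0:ℝ) ≤ (((bN : ℝ) + 1) * Real.log 2) / (2 * δ ^ 2) := by positivity
    rw [hkdef]; push_cast
    linarith [Nat.floor_le h0]
  clear_value k
  -- total failure probability < 1
  have hfail : (Fintype.card P.MB : ℝ) * (2 * Real.exp (-(2 * k * δ ^ 2))) < 1 := by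
    have hexplt : Real.exp (-(2 * k * δ ^ 2))
        < Real.exp (-(((bN:ℝ) + 1) * Real.log 2)) := by
      apply Real.exp_lt_exp.2
      rw [div_lt_iff₀ (by positivity)] at hkR
      nlinarith
    have h2pow : Real.exp (-(((bN:ℝ) + 1) * Real.log 2)) = ((2:ℝ) ^ (bN + 1))⁻¹ := by
      rw [Real.exp_neg]
      congr 1
      have : ((bN:ℝ) + 1) * Real.log 2 = ((bN + 1 : ℕ) : ℝ) * Real.log 2 := by push_cast; ring
      rw [this, Real.exp_nat_mul, Real.exp_log two_pos]
    have hcB : (Fintype.card P.MB : ℝ) ≤ (2:ℝ) ^ bN := by exact_mod_cast hcardB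
    have hEpos : 0 < Real.exp (-(2 * k * δ ^ 2)) := Real.exp_pos _
    have hpowpos : (0:ℝ) < (2:ℝ) ^ (bN + 1) := by positivity
    calc (Fintype.card P.MB : ℝ) * (2 * Real.exp (-(2 * k * δ ^ 2)))
        ≤ (2:ℝ) ^ bN * (2 * Real.exp (-(2 * k * δ ^ 2))) := by nlinarith
      _ = (2:ℝ) ^ (bN + 1) * Real.exp (-(2 * k * δ ^ 2)) := by rw [pow_succ]; ring
      _ < (2:ℝ) ^ (bN + 1) * ((2:ℝ) ^ (bN + 1))⁻¹ := by
          apply mul_lt_mul_of_pos_left _ hpowpos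
          rw [← h2pow]; exact hexplt
      _ = 1 := mul_inv_cancel₀ (ne_of_gt hpowpos)
  -- existence of good sample tuples
  have hgood : ∀ x : Fin n → Bool, ∃ T : Fin k → P.MA, ∀ mB : P.MB,
      |(∑ i, P.refAcc (T i) mB) - P.Rbar x mB * k| < δ * k := by
    intro x
    have hBad : (FinDist.piDist (P.distA x) k).probEvent
        (fun T => ∃ mB : P.MB,
          ((P.Rbar x mB + δ) * k ≤ ∑ i, P.refAcc (T i) mB) ∨
          ((∑ i, P.refAcc (T i) mB) ≤ (P.Rbar x mB - δ) * k)) < 1 := by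
      have step1 := FinDist.probEvent_union_le (FinDist.piDist (P.distA x) k)
        (fun mB (T : Fin k → P.MA) =>
          ((P.Rbar x mB + δ) * k ≤ ∑ i, P.refAcc (T i) mB) ∨
          ((∑ i, P.refAcc (T i) mB) ≤ (P.Rbar x mB - δ) * k))
      have step2 : ∑ mB : P.MB, (FinDist.piDist (P.distA x) k).probEvent
          (fun T => ((P.Rbar x mB + δ) * k ≤ ∑ i, P.refAcc (T i) mB) ∨
            ((∑ i, P.refAcc (T i) mB) ≤ (P.Rbar x mB - δ) * k))
          ≤ (Fintype.card P.MB : ℝ) * (2 * Real.exp (-(2 * k * δ ^ 2))) := by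
        refine le_trans (Finset.sum_le_sum fun mB _ => ?_)
          (le_of_eq (by rw [Finset.sum_const, Finset.card_univ, nsmul_eq_mul]))
        refine le_trans (FinDist.probEvent_or_le _ _ _) ?_
        have h1 := P.chernoff_up x mB k hδpos.le
        have h2 := P.chernoff_lo x mB k hδpos.le
        linarith
      exact lt_of_le_of_lt (le_trans step1 step2) hfail
    obtain ⟨T, hT⟩ := FinDist.exists_not_of_probEvent_lt_one _ _ hBad
    push_neg at hT
    refine ⟨T, fun mB => ?_⟩
    obtain ⟨h1, h2⟩ := hT mB
    rw [abs_lt]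
    constructor <;> nlinarith
  choose T hT using hgood
  -- injectivity of the chosen tuples
  have hinj : Function.Injective T := by
    intro x x' hxx
    by_contra hne
    have hkR0 : (0:ℝ) < (k:ℝ) := by exact_mod_cast hkpos
    -- acceptance facts
    have haccxx : 1 - ε ≤ P.acc x x := by
      have h := hP x x
      have hEQ : EQfun n x x = true := by simp [EQfun]
      rw [PrivSMP.err, hEQ] at h
      have heq : FinDist.probEvent P.randDist
          (fun r => P.pC (P.pA x r.1) (P.pB x r.2.1) r.2.2 ≠ true) = 1 - P.acc x x :=
        FinDist.probEvent_not _ _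
      rw [heq] at h
      linarith
    have haccx'x : P.acc x' x ≤ ε := by
      have h := hP x' x
      have hEQ : EQfun n x' x = false := by
        simp only [EQfun, decide_eq_false_iff_not]
        exact fun hc => hne hc.symm
      rw [PrivSMP.err, hEQ] at h
      have heq : FinDist.probEvent P.randDist
          (fun r => P.pC (P.pA x' r.1) (P.pB x r.2.1) r.2.2 ≠ false) = P.acc x' x :=
        FinDist.probEvent_congr fun r => by simp [PrivSMP.acc]
      rw [heq] at h
      exact h
    have hVx : ∀ mB, |(∑ i, P.refAcc (T x i) mB) - P.Rbar x mB * k| < δ * k := hT x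
    have hVx' : ∀ mB, |(∑ i, P.refAcc (T x i) mB) - P.Rbar x' mB * k| < δ * k := by
      intro mB
      have h := hT x' mB
      rw [← hxx] at h
      exact h
    -- weighted averages
    have hW1 : |(∑ mB, P.wB x mB * ∑ i, P.refAcc (T x i) mB) - P.acc x x * k| < δ * k := by
      rw [P.acc_eq x x]
      have key : (∑ mB, P.wB x mB * ∑ i, P.refAcc (T x i) mB)
          - (∑ mB, P.wB x mB * P.Rbar x mB) * k
          = ∑ mB, P.wB x mB * ((∑ i, P.refAcc (T x i) mB) - P.Rbar x mB * k) := by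
        rw [Finset.sum_mul, ← Finset.sum_sub_distrib]
        exact Finset.sum_congr rfl fun mB _ => by ring
      rw [key]
      exact FinDist.weighted_abs_lt _ _ (fun mB => P.wB_nonneg x mB) (P.wB_sum_one x) hVx
    have hW2 : |(∑ mB, P.wB x mB * ∑ i, P.refAcc (T x i) mB) - P.acc x' x * k| < δ * k := by
      rw [P.acc_eq x' x]
      have key : (∑ mB, P.wB x mB * ∑ i, P.refAcc (T x i) mB)
          - (∑ mB, P.wB x mB * P.Rbar x' mB) * k
          = ∑ mB, P.wB x mB * ((∑ i, P.refAcc (T x i) mB) - P.Rbar x' mB * k) := by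
        rw [Finset.sum_mul, ← Finset.sum_sub_distrib]
        exact Finset.sum_congr rfl fun mB _ => by ring
      rw [key]
      exact FinDist.weighted_abs_lt _ _ (fun mB => P.wB_nonneg x mB) (P.wB_sum_one x) hVx'
    rw [abs_lt] at hW1 hW2
    have e1 : (1 - ε) * k ≤ P.acc x x * k := mul_le_mul_of_nonneg_right haccxx hkR0.le
    have e2 : P.acc x' x * k ≤ ε * k := mul_le_mul_of_nonneg_right haccx'x hkR0.le
    have e4 : δ * k = (1/2) * k - ε * k := by rw [hδdef]; ring
    linarith [hW1.1, hW2.2]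
  -- counting
  have hcount : 2 ^ n ≤ Fintype.card P.MA ^ k := by
    have h1 := Fintype.card_le_of_injective T hinj
    simpa [Fintype.card_fun] using h1
  have hnk : n ≤ aN * k := by
    have h2 : (2:ℕ) ^ n ≤ 2 ^ (aN * k) := by
      refine le_trans hcount ?_
      rw [pow_mul]
      exact Nat.pow_le_pow_left hcardA k
    exact (Nat.pow_le_pow_iff_right (by norm_num)).1 h2
  -- final arithmetic
  have hg3 : g3 ε = 2 * δ ^ 2 / Real.log 2 := by
    rw [g3, log2e, Real.logb, Real.log_exp, hδdef]
    ring
  have hg0 : 0 ≤ g3 ε := by rw [hg3]; positivity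
  have hgn : g3 ε * n ≤ ((aN:ℝ) + 3) * ((bN:ℝ) + 3) := by
    have hA0 : (0:ℝ) ≤ (aN:ℝ) := Nat.cast_nonneg _
    have hB0 : (0:ℝ) ≤ (bN:ℝ) := Nat.cast_nonneg _
    have hnR : (n:ℝ) ≤ (aN:ℝ) * (k:ℝ) := by exact_mod_cast hnk
    have hd2L : 2 * δ ^ 2 ≤ Real.log 2 := by
      have hdd : δ * δ ≤ 1/2 * (1/2) := mul_le_mul hδhalf hδhalf hδpos.le (by norm_num)
      nlinarith [Real.log_two_gt_d9]
    rw [hg3, div_mul_eq_mul_div, div_le_iff₀ hlog2pos]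
    have c1 : 2 * δ ^ 2 * (n:ℝ) ≤ 2 * δ ^ 2 * ((aN:ℝ) * (k:ℝ)) := by
      have := mul_le_mul_of_nonneg_left hnR (show (0:ℝ) ≤ 2 * δ ^ 2 by positivity)
      linarith
    have c3 : (k:ℝ) * (2 * δ ^ 2) ≤ ((bN:ℝ) + 1) * Real.log 2 + 2 * δ ^ 2 := by
      have h := mul_le_mul_of_nonneg_right hkle (show (0:ℝ) ≤ 2 * δ ^ 2 by positivity)
      rw [add_mul, div_mul_cancel₀, one_mul] at h
      · exact h
      · positivity
    have d1 : (aN:ℝ) * ((k:ℝ) * (2 * δ ^ 2))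
        ≤ (aN:ℝ) * (((bN:ℝ) + 1) * Real.log 2 + 2 * δ ^ 2) :=
      mul_le_mul_of_nonneg_left c3 hA0
    have d2 : (aN:ℝ) * (((bN:ℝ) + 1) * Real.log 2 + 2 * δ ^ 2)
        ≤ (aN:ℝ) * (((bN:ℝ) + 1) * Real.log 2 + Real.log 2) :=
      mul_le_mul_of_nonneg_left (by linarith) hA0
    have d3 : (aN:ℝ) * (((bN:ℝ) + 1) * Real.log 2 + Real.log 2)
        ≤ ((aN:ℝ) + 3) * ((bN:ℝ) + 3) * Real.log 2 := by
      nlinarith [mul_nonneg hA0 hlog2pos.le, mul_nonneg hB0 hlog2pos.le]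
    nlinarith [c1, d1, d2, d3]
  -- AM–GM and square roots
  have hCC : P.CC = (aN:ℝ) + (bN:ℝ) := by
    rw [PrivSMP.CC, haR, hbR]
  have hs1 : Real.sqrt (g3 ε * n) ≤ Real.sqrt (((aN:ℝ) + 3) * ((bN:ℝ) + 3)) :=
    Real.sqrt_le_sqrt hgn
  have hs2 : Real.sqrt (((aN:ℝ) + 3) * ((bN:ℝ) + 3)) ≤ ((aN:ℝ) + (bN:ℝ) + 6) / 2 := by
    have hnn : (0:ℝ) ≤ ((aN:ℝ) + (bN:ℝ) + 6) / 2 := by positivity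
    rw [show ((aN:ℝ) + (bN:ℝ) + 6) / 2 = Real.sqrt ((((aN:ℝ) + (bN:ℝ) + 6) / 2) ^ 2) from
      (Real.sqrt_sq hnn).symm]
    apply Real.sqrt_le_sqrt
    nlinarith [sq_nonneg ((aN:ℝ) - (bN:ℝ))]
  have hsm : Real.sqrt (g3 ε * n) = Real.sqrt (g3 ε) * Real.sqrt n :=
    Real.sqrt_mul hg0 _
  rw [ge_iff_le, hCC]
  have : 2 * Real.sqrt (g3 ε) * Real.sqrt n ≤ (aN:ℝ) + (bN:ℝ) + 6 := by
    rw [mul_assoc, ← hsm]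
    linarith [hs1, hs2]
  linarith

end
end

section
/- Let f : X × Y → {0,1} be a Boolean function on finite nonempty sets X, Y, let ε ≥ 0 and δ > 0 satisfy ε + δ < 1/2, and set n_A = log₂|X|, n_B = log₂|Y|. For every shared-randomness SMP protocol Π computing f with worst-case error at most ε, there exists a private-coin SMP protocol Π′ computing f with worst-case error at most ε + δ and with CC_priv(Π′) ≤ CC_sh(Π) + g₂(n_A, n_B, δ), where g₂(x,y,z) = 2·log₂(2(x+y)/(z²·log₂ e) + 1) + 2. In particular CC_priv(f, ε+δ) ≤ CC_sh(f, ε) + g₂(n_A, n_B, δ). -/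
open scoped BigOperators
open scoped Classical

noncomputable section NewmanAux

namespace NewmanAux

open Real

lemma hoeffding_core {μ : ℝ} (h0 : 0 ≤ μ) (h1 : μ ≤ 1) {l : ℝ} (hl : 0 ≤ l) :
    1 - μ + μ * exp l ≤ exp (l * μ + l ^ 2 / 8) := by
  set D : ℝ → ℝ := fun x => 1 - μ + μ * exp x with hDdef
  have hDpos : ∀ x, 0 < D x := by
    intro x
    have := exp_pos x
    rcases lt_or_eq_of_le h0 with h | h
    · have : 0 ≤ μ * exp x := le_of_lt (mul_pos h this)
      simp only [hDdef]; nlinarith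
    · simp only [hDdef, ← h]; norm_num
  have hDd : ∀ x, HasDerivAt D (μ * exp x) x := by
    intro x
    exact ((Real.hasDerivAt_exp x).const_mul μ).const_add (1 - μ)
  set p : ℝ → ℝ := fun x => μ * exp x / D x with hpdef
  have hp0 : ∀ x, 0 ≤ p x := fun x =>
    div_nonneg (mul_nonneg h0 (exp_pos x).le) (hDpos x).le
  have hp1 : ∀ x, p x ≤ 1 := by
    intro x
    rw [hpdef]
    rw [div_le_one (hDpos x)]
    simp only [hDdef]; nlinarith [exp_pos x]
  have hpd : ∀ x, HasDerivAt p (p x * (1 - p x)) x := by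
    intro x
    have h := ((Real.hasDerivAt_exp x).const_mul μ).div (hDd x) (hDpos x).ne'
    refine h.congr_deriv ?_
    have hne : (1:ℝ) - μ + μ * Real.exp x ≠ 0 := (hDpos x).ne'
    rw [hpdef]
    simp only [hDdef]
    field_simp
  set φ' : ℝ → ℝ := fun x => μ + x / 4 - p x with hφ'def
  have hφ'd : ∀ x, HasDerivAt φ' (1 / 4 - p x * (1 - p x)) x := by
    intro x
    have h1' : HasDerivAt (fun x : ℝ => μ + x / 4) (1 / 4) x := by
      simpa using ((hasDerivAt_id x).div_const 4).const_add μ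
    exact h1'.sub (hpd x)
  have hφ'mono : Monotone φ' := by
    apply monotone_of_deriv_nonneg
    · exact fun x => (hφ'd x).differentiableAt
    · intro x
      rw [(hφ'd x).deriv]
      nlinarith [sq_nonneg (p x - 1/2)]
  have hφ'0 : φ' 0 = 0 := by
    simp [hφ'def, hpdef, hDdef]
  set φ : ℝ → ℝ := fun x => x * μ + x ^ 2 / 8 - Real.log (D x) with hφdef
  have hφd : ∀ x, HasDerivAt φ (φ' x) x := by
    intro x
    have h1' : HasDerivAt (fun x : ℝ => x * μ + x ^ 2 / 8) (μ + x / 4) x := by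
      have h2 := ((hasDerivAt_id x).mul_const μ).add ((hasDerivAt_pow 2 x).div_const 8)
      exact h2.congr_deriv (by rw [show (2:ℕ) - 1 = 1 from rfl]; push_cast; ring)
    have hlog : HasDerivAt (fun x => Real.log (D x)) (μ * exp x / D x) x :=
      (hDd x).log (hDpos x).ne'
    exact h1'.sub hlog
  have hφmono : MonotoneOn φ (Set.Ici 0) := by
    apply monotoneOn_of_deriv_nonneg (convex_Ici 0)
    · exact (fun x _ => (hφd x).differentiableAt.continuousAt.continuousWithinAt)
    · exact fun x _ => (hφd x).differentiableAt.differentiableWithinAt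
    · intro x hx
      rw [interior_Ici] at hx
      rw [(hφd x).deriv, ← hφ'0]
      exact hφ'mono (le_of_lt hx)
  have hφ0 : φ 0 = 0 := by simp [hφdef, hDdef]
  have hφl : 0 ≤ φ l := by
    rw [← hφ0]
    exact hφmono Set.self_mem_Ici hl hl
  have hlog_le : Real.log (D l) ≤ l * μ + l ^ 2 / 8 := by
    simp only [hφdef] at hφl; linarith
  calc D l = exp (Real.log (D l)) := (exp_log (hDpos l)).symm
    _ ≤ exp (l * μ + l ^ 2 / 8) := exp_le_exp.2 hlog_le

variable {A : Type} [Fintype A]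

lemma probEvent_nonneg (p : FinDist A) (E : A → Prop) : 0 ≤ p.probEvent E :=
  Finset.sum_nonneg fun a _ => by by_cases h : E a <;> simp [FinDist.probEvent, h, p.nonneg a]

lemma probEvent_le_one (p : FinDist A) (E : A → Prop) : p.probEvent E ≤ 1 := by
  rw [← p.sum_one]
  exact Finset.sum_le_sum fun a _ => by by_cases h : E a <;> simp [h, p.nonneg a]

/-- Uniform distribution on `Fin t`. -/
def unif (t : ℕ) (ht : 0 < t) : FinDist (Fin t) where
  prob := fun _ => (t : ℝ)⁻¹
  nonneg := fun _ => by positivity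
  sum_one := by
    simp only [Finset.sum_const, Finset.card_univ, Fintype.card_fin, nsmul_eq_mul]
    field_simp

/-- i.i.d. tuple distribution. -/
def tupleDist (q : FinDist A) (t : ℕ) : FinDist (Fin t → A) where
  prob := fun w => ∏ i, q.prob (w i)
  nonneg := fun w => Finset.prod_nonneg fun i _ => q.nonneg _
  sum_one := by
    rw [← Fintype.prod_sum fun (_ : Fin t) (a : A) => q.prob a]
    simp [q.sum_one]

lemma mgf_le (q : FinDist A) (h : A → ℝ) (h0 : ∀ a, 0 ≤ h a) (h1 : ∀ a, h a ≤ 1)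
    {l : ℝ} (hl : 0 ≤ l) :
    ∑ a, q.prob a * Real.exp (l * h a) ≤ Real.exp (l * (∑ a, q.prob a * h a) + l ^ 2 / 8) := by
  set μ := ∑ a, q.prob a * h a with hμ
  have hμ0 : 0 ≤ μ := Finset.sum_nonneg fun a _ => mul_nonneg (q.nonneg a) (h0 a)
  have hμ1 : μ ≤ 1 := by
    rw [hμ, ← q.sum_one]
    exact Finset.sum_le_sum fun a _ => by nlinarith [q.nonneg a, h1 a, h0 a]
  have step1 : ∀ a, Real.exp (l * h a) ≤ 1 - h a + h a * Real.exp l := by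
    intro a
    have hc := convexOn_exp.2 (Set.mem_univ (0:ℝ)) (Set.mem_univ l)
      (by linarith [h1 a] : (0:ℝ) ≤ 1 - h a) (h0 a) (by ring)
    simpa [smul_eq_mul, mul_comm] using hc
  calc ∑ a, q.prob a * Real.exp (l * h a)
      ≤ ∑ a, q.prob a * (1 - h a + h a * Real.exp l) :=
        Finset.sum_le_sum fun a _ => mul_le_mul_of_nonneg_left (step1 a) (q.nonneg a)
    _ = 1 - μ + μ * Real.exp l := by
        have hrw : ∀ a, q.prob a * (1 - h a + h a * Real.exp l)
            = q.prob a - q.prob a * h a + q.prob a * h a * Real.exp l := fun a => by ring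
        simp_rw [hrw]
        rw [Finset.sum_add_distrib, Finset.sum_sub_distrib, ← Finset.sum_mul, q.sum_one, hμ]
    _ ≤ _ := hoeffding_core hμ0 hμ1 hl

lemma tail_le (q : FinDist A) (h : A → ℝ) (h0 : ∀ a, 0 ≤ h a) (h1 : ∀ a, h a ≤ 1)
    (t : ℕ) {d : ℝ} (hd : 0 < d) :
    FinDist.probEvent (tupleDist q t)
      (fun w => (t : ℝ) * ((∑ a, q.prob a * h a) + d) < ∑ i, h (w i)) ≤
      Real.exp (-(2 * t * d ^ 2)) := by
  classical
  set μ := ∑ a, q.prob a * h a with hμ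
  set l : ℝ := 4 * d with hldef
  have hl0 : 0 ≤ l := by positivity
  have key : FinDist.probEvent (tupleDist q t)
      (fun w => (t : ℝ) * (μ + d) < ∑ i, h (w i)) ≤
      ∑ w : Fin t → A, (tupleDist q t).prob w
        * Real.exp (l * ((∑ i, h (w i)) - t * (μ + d))) := by
    unfold FinDist.probEvent
    apply Finset.sum_le_sum
    intro w _
    by_cases hw : (t:ℝ) * (μ + d) < ∑ i, h (w i)
    · rw [if_pos hw]
      have h1' : (1:ℝ) ≤ Real.exp (l * ((∑ i, h (w i)) - t * (μ + d))) := by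
        rw [Real.one_le_exp_iff]
        have : 0 ≤ (∑ i, h (w i)) - t * (μ + d) := by linarith
        positivity
      nlinarith [(tupleDist q t).nonneg w]
    · rw [if_neg hw]
      have := (tupleDist q t).nonneg w
      positivity
  have factored : ∑ w : Fin t → A, (tupleDist q t).prob w
        * Real.exp (l * ((∑ i, h (w i)) - t * (μ + d)))
      = Real.exp (-(l * (t * (μ + d)))) * (∑ a, q.prob a * Real.exp (l * h a)) ^ t := by
    have hterm : ∀ w : Fin t → A, (tupleDist q t).prob w
        * Real.exp (l * ((∑ i, h (w i)) - t * (μ + d)))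
        = Real.exp (-(l * (t * (μ + d)))) * ∏ i, (q.prob (w i) * Real.exp (l * h (w i))) := by
      intro w
      rw [Finset.prod_mul_distrib]
      have he : Real.exp (l * ((∑ i, h (w i)) - t * (μ + d)))
          = Real.exp (-(l * (t * (μ + d)))) * ∏ i, Real.exp (l * h (w i)) := by
        rw [← Real.exp_sum, ← Real.exp_add]
        congr 1
        rw [← Finset.mul_sum]
        ring
      rw [he]
      show (∏ i, q.prob (w i)) * _ = _
      ring
    simp_rw [hterm]
    rw [← Finset.mul_sum]
    congr 1
    rw [← Fintype.prod_sum fun (_ : Fin t) (a : A) => q.prob a * Real.exp (l * h a)]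
    simp
  calc FinDist.probEvent (tupleDist q t) (fun w => (t:ℝ) * (μ + d) < ∑ i, h (w i))
      ≤ Real.exp (-(l * (t * (μ + d)))) * (∑ a, q.prob a * Real.exp (l * h a)) ^ t := by
        rw [← factored]; exact key
    _ ≤ Real.exp (-(l * (t * (μ + d)))) * (Real.exp (l * μ + l ^ 2 / 8)) ^ t := by
        apply mul_le_mul_of_nonneg_left _ (Real.exp_pos _).le
        apply pow_le_pow_left₀
        · exact Finset.sum_nonneg fun a _ => mul_nonneg (q.nonneg a) (Real.exp_pos _).le
        · exact mgf_le q h h0 h1 hl0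
    _ = Real.exp (-(l * (t * (μ + d))) + t * (l * μ + l ^ 2 / 8)) := by
        rw [← Real.exp_nat_mul, ← Real.exp_add]
    _ ≤ Real.exp (-(2 * t * d ^ 2)) := by
        apply Real.exp_le_exp.2
        have ht0 : (0:ℝ) ≤ t := Nat.cast_nonneg t
        rw [hldef]
        nlinarith [sq_nonneg d]

lemma exists_good {K : Type} [Fintype K] (q : FinDist A) (h : K → A → ℝ)
    (h0 : ∀ k a, 0 ≤ h k a) (h1 : ∀ k a, h k a ≤ 1) (t : ℕ) {d : ℝ} (hd : 0 < d)
    (hN : (Fintype.card K : ℝ) * Real.exp (-(2 * t * d ^ 2)) < 1) :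
    ∃ w : Fin t → A, ∀ k, ∑ i, h k (w i) ≤ (t : ℝ) * ((∑ a, q.prob a * h k a) + d) := by
  classical
  by_contra hcon
  push_neg at hcon
  have hle : (1:ℝ) ≤ ∑ k : K, FinDist.probEvent (tupleDist q t)
      (fun w => (t:ℝ) * ((∑ a, q.prob a * h k a) + d) < ∑ i, h k (w i)) := by
    rw [← (tupleDist q t).sum_one]
    unfold FinDist.probEvent
    rw [Finset.sum_comm]
    apply Finset.sum_le_sum
    intro w _
    obtain ⟨k, hk⟩ := hcon w
    have hsingle : (if (t:ℝ) * ((∑ a, q.prob a * h k a) + d) < ∑ i, h k (w i)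
            then (tupleDist q t).prob w else 0)
        ≤ ∑ k' : K, (if (t:ℝ) * ((∑ a, q.prob a * h k' a) + d) < ∑ i, h k' (w i)
            then (tupleDist q t).prob w else 0) := by
      apply Finset.single_le_sum (f := fun k' =>
          if (t:ℝ) * ((∑ a, q.prob a * h k' a) + d) < ∑ i, h k' (w i)
            then (tupleDist q t).prob w else 0) _ (Finset.mem_univ k)
      intro k' _
      split
      · exact (tupleDist q t).nonneg w
      · exact le_refl 0
    rw [if_pos hk] at hsingle
    exact hsingle
  have hub : ∑ k : K, FinDist.probEvent (tupleDist q t)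
      (fun w => (t:ℝ) * ((∑ a, q.prob a * h k a) + d) < ∑ i, h k (w i))
      ≤ (Fintype.card K : ℝ) * Real.exp (-(2 * t * d ^ 2)) := by
    calc _ ≤ ∑ _k : K, Real.exp (-(2 * t * d ^ 2)) :=
          Finset.sum_le_sum fun k _ => tail_le q (h k) (h0 k) (h1 k) t hd
      _ = _ := by simp [Finset.sum_const, nsmul_eq_mul]
  linarith

section Protocol

variable {X Y : Type} [Fintype X] [Fintype Y]

lemma sum_mul_sum_mul {A B : Type} [Fintype A] [Fintype B] (c : A → ℝ) (d : B → ℝ)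
    (F : A → B → ℝ) :
    ∑ z : A × B, (c z.1 * d z.2) * F z.1 z.2 = ∑ a, c a * ∑ b, d b * F a b := by
  rw [Fintype.sum_prod_type]
  exact Finset.sum_congr rfl fun a _ => by
    rw [Finset.mul_sum]
    exact Finset.sum_congr rfl fun b _ => by ring

/-- Error probability for fixed values of the shared randomness. -/
def eP (P : ShSMP X Y Bool) (f : X → Y → Bool) (x : X) (y : Y) (a : P.RAC) (b : P.RBC) : ℝ :=
  FinDist.probEvent (P.dRA.prod (P.dRB.prod P.dRC))
    (fun r => P.pC (P.pA x r.1 a) (P.pB y r.2.1 b) r.2.2 a b ≠ f x y)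

lemma eP_nonneg (P : ShSMP X Y Bool) (f : X → Y → Bool) (x : X) (y : Y) (a : P.RAC)
    (b : P.RBC) : 0 ≤ eP P f x y a b := probEvent_nonneg _ _

lemma eP_le_one (P : ShSMP X Y Bool) (f : X → Y → Bool) (x : X) (y : Y) (a : P.RAC)
    (b : P.RBC) : eP P f x y a b ≤ 1 := probEvent_le_one _ _

def reord1 (P : ShSMP X Y Bool) :
    (P.RA × P.RB × P.RC × P.RAC × P.RBC) ≃ (P.RAC × P.RBC) × P.RA × P.RB × P.RC where
  toFun ω := ((ω.2.2.2.1, ω.2.2.2.2), (ω.1, ω.2.1, ω.2.2.1))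
  invFun z := (z.2.1, z.2.2.1, z.2.2.2, z.1.1, z.1.2)
  left_inv _ := rfl
  right_inv _ := rfl

lemma err_pair (P : ShSMP X Y Bool) (f : X → Y → Bool) (x : X) (y : Y) :
    P.err f x y = ∑ z : P.RAC × P.RBC,
      (P.dRAC.prob z.1 * P.dRBC.prob z.2) * eP P f x y z.1 z.2 := by
  unfold ShSMP.err ShSMP.randDist eP FinDist.probEvent
  simp only [Finset.mul_sum]
  rw [← Fintype.sum_prod_type']
  apply Fintype.sum_equiv (reord1 P)
  intro ω
  obtain ⟨r1, r2, r3, a, b⟩ := ω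
  dsimp only [reord1, Equiv.coe_fn_mk, FinDist.prod]
  by_cases hc : P.pC (P.pA x r1 a) (P.pB y r2 b) r3 a b ≠ f x y
  · simp only [ne_eq, hc, not_false_eq_true, ↓reduceIte]; ring
  · simp only [ne_eq, not_not] at hc; simp [hc]

/-- The derandomized private-coin protocol. -/
def privOf (P : ShSMP X Y Bool) {t : ℕ} (ht : 0 < t) (u : Fin t → P.RAC)
    (v : Fin t → P.RBC) : PrivSMP X Y Bool where
  MA := P.MA × Fin t
  MB := P.MB × Fin t
  RA := P.RA × Fin t
  RB := P.RB × Fin t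
  RC := P.RC
  neMA := ⟨(Classical.arbitrary _, ⟨0, ht⟩)⟩
  neMB := ⟨(Classical.arbitrary _, ⟨0, ht⟩)⟩
  neRA := ⟨(Classical.arbitrary _, ⟨0, ht⟩)⟩
  neRB := ⟨(Classical.arbitrary _, ⟨0, ht⟩)⟩
  dRA := P.dRA.prod (unif t ht)
  dRB := P.dRB.prod (unif t ht)
  dRC := P.dRC
  pA := fun x r => (P.pA x r.1 (u r.2), r.2)
  pB := fun y s => (P.pB y s.1 (v s.2), s.2)
  pC := fun m m' rc => P.pC m.1 m'.1 rc (u m.2) (v m'.2)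

def reord2 (P : ShSMP X Y Bool) (t : ℕ) :
    ((P.RA × Fin t) × (P.RB × Fin t) × P.RC) ≃ (Fin t × Fin t) × P.RA × P.RB × P.RC where
  toFun ω := ((ω.1.2, ω.2.1.2), (ω.1.1, ω.2.1.1, ω.2.2))
  invFun z := ((z.2.1, z.1.1), (z.2.2.1, z.1.2), z.2.2.2)
  left_inv _ := rfl
  right_inv _ := rfl

lemma priv_pair (P : ShSMP X Y Bool) (f : X → Y → Bool) {t : ℕ} (ht : 0 < t)
    (u : Fin t → P.RAC) (v : Fin t → P.RBC) (x : X) (y : Y) :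
    (privOf P ht u v).err f x y
      = ∑ z : Fin t × Fin t, ((t:ℝ)⁻¹ * (t:ℝ)⁻¹) * eP P f x y (u z.1) (v z.2) := by
  unfold PrivSMP.err PrivSMP.randDist privOf eP FinDist.probEvent
  simp only [Finset.mul_sum]
  rw [← Fintype.sum_prod_type']
  apply Fintype.sum_equiv (reord2 P t)
  intro ω
  obtain ⟨⟨r1, i⟩, ⟨r2, j⟩, r3⟩ := ω
  dsimp only [reord2, Equiv.coe_fn_mk, FinDist.prod, unif]
  by_cases hc : P.pC (P.pA x r1 (u i)) (P.pB y r2 (v j)) r3 (u i) (v j) ≠ f x y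
  · simp only [ne_eq, hc, not_false_eq_true, ↓reduceIte]; ring
  · simp only [ne_eq, not_not] at hc; simp [hc]

lemma privCC_nonneg {Z : Type} [Fintype Z] (P' : PrivSMP X Y Z) : 0 ≤ P'.CC := by
  unfold PrivSMP.CC
  have h1 : (0:ℝ) ≤ Real.logb 2 (Fintype.card P'.MA) :=
    Real.logb_nonneg one_lt_two (by exact_mod_cast Fintype.card_pos)
  have h2 : (0:ℝ) ≤ Real.logb 2 (Fintype.card P'.MB) :=
    Real.logb_nonneg one_lt_two (by exact_mod_cast Fintype.card_pos)
  have := le_trans h1 (Int.le_ceil _)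
  have := le_trans h2 (Int.le_ceil _)
  linarith

lemma ceil_card_prod_fin (M : Type) [Fintype M] [Nonempty M] (m : ℕ) :
    (⌈Real.logb 2 (Fintype.card (M × Fin (2 ^ m)))⌉ : ℝ)
      = (⌈Real.logb 2 (Fintype.card M)⌉ : ℝ) + m := by
  have hM : (0:ℝ) < Fintype.card M := by exact_mod_cast Fintype.card_pos
  have hcard : ((Fintype.card (M × Fin (2 ^ m)) : ℕ) : ℝ)
      = (Fintype.card M : ℝ) * (2:ℝ) ^ m := by
    rw [Fintype.card_prod, Fintype.card_fin]
    push_cast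
    ring
  rw [hcard, Real.logb_mul hM.ne' (by positivity), Real.logb_pow,
    Real.logb_self_eq_one one_lt_two, mul_one, Int.ceil_add_natCast]
  push_cast
  ring

end Protocol

section Main

variable {X Y : Type} [Fintype X] [Fintype Y]

/-- Trivial shared-randomness protocol: send the inputs. -/
def trivSh [Nonempty X] [Nonempty Y] (f : X → Y → Bool) : ShSMP X Y Bool where
  MA := X
  MB := Y
  RA := Unit
  RB := Unit
  RC := Unit
  RAC := Unit
  RBC := Unit
  dRA := ⟨fun _ => 1, fun _ => zero_le_one, by simp⟩
  dRB := ⟨fun _ => 1, fun _ => zero_le_one, by simp⟩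
  dRC := ⟨fun _ => 1, fun _ => zero_le_one, by simp⟩
  dRAC := ⟨fun _ => 1, fun _ => zero_le_one, by simp⟩
  dRBC := ⟨fun _ => 1, fun _ => zero_le_one, by simp⟩
  pA := fun x _ _ => x
  pB := fun y _ _ => y
  pC := fun x y _ _ _ => f x y

lemma trivSh_computes [Nonempty X] [Nonempty Y] (f : X → Y → Bool) {ε : ℝ} (hε : 0 ≤ ε) :
    (trivSh f).Computes f ε := by
  intro x y
  unfold ShSMP.err trivSh
  simpa [FinDist.probEvent] using hε

set_option maxHeartbeats 2000000 in
theorem main_aux [Nonempty X] [Nonempty Y]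
    (f : X → Y → Bool) (ε δ : ℝ) (hε : 0 ≤ ε) (hδ : 0 < δ)
    (P : ShSMP X Y Bool) (hP : P.Computes f ε) :
    ∃ P' : PrivSMP X Y Bool, P'.Computes f (ε + δ) ∧
      P'.CC ≤ P.CC + g2 (Real.logb 2 (Fintype.card X)) (Real.logb 2 (Fintype.card Y)) δ := by
  classical
  have hδ2 : (0:ℝ) < δ ^ 2 := by positivity
  have hlog2 : (0:ℝ) < Real.log 2 := Real.log_pos one_lt_two
  have hl2e : log2e = (Real.log 2)⁻¹ := by
    unfold log2e
    rw [Real.logb, Real.log_exp, one_div]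
  set T : ℝ := 2 * (Real.logb 2 (Fintype.card X) + Real.logb 2 (Fintype.card Y))
      / (δ ^ 2 * log2e) with hTdef
  have hcX : (0:ℝ) < Fintype.card X := by exact_mod_cast Fintype.card_pos
  have hcY : (0:ℝ) < Fintype.card Y := by exact_mod_cast Fintype.card_pos
  set N : ℕ := Fintype.card X * Fintype.card Y with hNdef
  have hN1 : (1:ℝ) ≤ (N:ℝ) := by
    rw [hNdef]
    push_cast
    have h1 : (1:ℝ) ≤ Fintype.card X := by exact_mod_cast Fintype.card_pos
    have h2 : (1:ℝ) ≤ Fintype.card Y := by exact_mod_cast Fintype.card_pos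
    nlinarith
  have hNpos : (0:ℝ) < (N:ℝ) := by linarith
  have hsumlog : Real.logb 2 (Fintype.card X) + Real.logb 2 (Fintype.card Y)
      = Real.log N / Real.log 2 := by
    rw [Real.logb, Real.logb, hNdef, ← add_div]
    congr 1
    push_cast
    rw [Real.log_mul hcX.ne' hcY.ne']
  have hTlog : T * δ ^ 2 = 2 * Real.log N := by
    rw [hTdef, hsumlog, hl2e]
    field_simp
  have hlogN0 : 0 ≤ Real.log N := Real.log_nonneg hN1
  have hT0 : 0 ≤ T := by nlinarith
  set c : ℕ := ⌊2 * T + 2⌋₊ with hcdef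
  have hc2 : 2 ≤ c := Nat.le_floor (by push_cast; linarith)
  set m : ℕ := Nat.log 2 c with hmdef
  set t : ℕ := 2 ^ m with htdef
  have ht0 : 0 < t := pow_pos (by norm_num : (0:ℕ) < 2) m
  have htR : (0:ℝ) < (t:ℝ) := by exact_mod_cast ht0
  have htle : (t:ℝ) ≤ 2 * T + 2 := by
    have h1 : t ≤ c := by rw [htdef, hmdef]; exact Nat.pow_log_le_self 2 (by omega)
    have h2 : (c:ℝ) ≤ 2 * T + 2 := Nat.floor_le (by linarith)
    calc (t:ℝ) ≤ (c:ℝ) := by exact_mod_cast h1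
      _ ≤ _ := h2
  have htgt : T + 1 < (t:ℝ) := by
    have h1 : c < 2 ^ (m + 1) := by rw [hmdef]; exact Nat.lt_pow_succ_log_self (by norm_num) c
    have h2 : (2:ℝ) * T + 2 < (c:ℝ) + 1 := by
      have := Nat.lt_floor_add_one (2 * T + 2)
      push_cast at this ⊢
      linarith
    have h3 : ((c:ℝ)) + 1 ≤ ((2 ^ (m + 1) : ℕ) : ℝ) := by exact_mod_cast Nat.succ_le_of_lt h1
    have h4 : ((2 ^ (m + 1) : ℕ) : ℝ) = 2 * (t:ℝ) := by
      rw [htdef]; push_cast [pow_succ]; ring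
    linarith
  have hcount : (Fintype.card (X × Y) : ℝ) * Real.exp (-(2 * t * (δ / 2) ^ 2)) < 1 := by
    have hcard : (Fintype.card (X × Y) : ℝ) = (N:ℝ) := by
      rw [Fintype.card_prod, hNdef]
    rw [hcard]
    nth_rewrite 1 [← Real.exp_log hNpos]
    rw [← Real.exp_add, ← Real.exp_zero]
    apply Real.exp_lt_exp.2
    nlinarith
  have hd2 : (0:ℝ) < δ / 2 := by linarith
  -- Stage 1: derandomize the Alice–referee shared randomness
  have hA0 : ∀ (k : X × Y) (a : P.RAC), 0 ≤ ∑ b, P.dRBC.prob b * eP P f k.1 k.2 a b :=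
    fun k a => Finset.sum_nonneg fun b _ =>
      mul_nonneg (P.dRBC.nonneg b) (eP_nonneg P f k.1 k.2 a b)
  have hA1 : ∀ (k : X × Y) (a : P.RAC), (∑ b, P.dRBC.prob b * eP P f k.1 k.2 a b) ≤ 1 := by
    intro k a
    calc ∑ b, P.dRBC.prob b * eP P f k.1 k.2 a b ≤ ∑ b, P.dRBC.prob b * 1 :=
        Finset.sum_le_sum fun b _ =>
          mul_le_mul_of_nonneg_left (eP_le_one P f k.1 k.2 a b) (P.dRBC.nonneg b)
      _ = 1 := by simp [P.dRBC.sum_one]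
  obtain ⟨u, hu⟩ := exists_good (A := P.RAC) (K := X × Y) P.dRAC
      (fun k a => ∑ b, P.dRBC.prob b * eP P f k.1 k.2 a b) hA0 hA1 t hd2 hcount
  have hu' : ∀ x y, (∑ i, ∑ b, P.dRBC.prob b * eP P f x y (u i) b) ≤ t * (ε + δ / 2) := by
    intro x y
    have h1 := hu (x, y)
    simp only [] at h1
    have hmean : (∑ a, P.dRAC.prob a * ∑ b, P.dRBC.prob b * eP P f x y a b) = P.err f x y := by
      rw [err_pair P f x y, sum_mul_sum_mul]
    rw [hmean] at h1
    have herr := hP x y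
    have ht0' : (0:ℝ) ≤ t := le_of_lt htR
    nlinarith
  -- Stage 2: derandomize the Bob–referee shared randomness
  have h20 : ∀ (k : X × Y) (b : P.RBC), 0 ≤ (t:ℝ)⁻¹ * ∑ i, eP P f k.1 k.2 (u i) b :=
    fun k b => mul_nonneg (inv_nonneg.2 (le_of_lt htR))
      (Finset.sum_nonneg fun i _ => eP_nonneg P f k.1 k.2 (u i) b)
  have h21 : ∀ (k : X × Y) (b : P.RBC), (t:ℝ)⁻¹ * (∑ i, eP P f k.1 k.2 (u i) b) ≤ 1 := by
    intro k b
    have hsle : (∑ i, eP P f k.1 k.2 (u i) b) ≤ (t:ℝ) := by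
      calc (∑ i, eP P f k.1 k.2 (u i) b) ≤ ∑ _i : Fin t, (1:ℝ) :=
          Finset.sum_le_sum fun i _ => eP_le_one P f k.1 k.2 (u i) b
        _ = t := by simp
    calc (t:ℝ)⁻¹ * (∑ i, eP P f k.1 k.2 (u i) b) ≤ (t:ℝ)⁻¹ * (t:ℝ) :=
        mul_le_mul_of_nonneg_left hsle (inv_nonneg.2 (le_of_lt htR))
      _ = 1 := inv_mul_cancel₀ htR.ne'
  obtain ⟨v, hv⟩ := exists_good (A := P.RBC) (K := X × Y) P.dRBC
      (fun k b => (t:ℝ)⁻¹ * ∑ i, eP P f k.1 k.2 (u i) b) h20 h21 t hd2 hcount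
  have hv' : ∀ x y, (∑ j, (t:ℝ)⁻¹ * ∑ i, eP P f x y (u i) (v j)) ≤ t * (ε + δ) := by
    intro x y
    have h1 := hv (x, y)
    simp only [] at h1
    have hmean2 : (∑ b, P.dRBC.prob b * ((t:ℝ)⁻¹ * ∑ i, eP P f x y (u i) b))
        = (t:ℝ)⁻¹ * ∑ i, ∑ b, P.dRBC.prob b * eP P f x y (u i) b := by
      calc ∑ b, P.dRBC.prob b * ((t:ℝ)⁻¹ * ∑ i, eP P f x y (u i) b)
          = ∑ b, ∑ i, (t:ℝ)⁻¹ * (P.dRBC.prob b * eP P f x y (u i) b) := by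
            refine Finset.sum_congr rfl fun b _ => ?_
            simp only [Finset.mul_sum]
            exact Finset.sum_congr rfl fun i _ => by ring
        _ = ∑ i, ∑ b, (t:ℝ)⁻¹ * (P.dRBC.prob b * eP P f x y (u i) b) := Finset.sum_comm
        _ = (t:ℝ)⁻¹ * ∑ i, ∑ b, P.dRBC.prob b * eP P f x y (u i) b := by
            simp only [Finset.mul_sum]
    rw [hmean2] at h1
    have hle2 : (t:ℝ)⁻¹ * (∑ i, ∑ b, P.dRBC.prob b * eP P f x y (u i) b)
        ≤ ε + δ / 2 := by
      have h2 := mul_le_mul_of_nonneg_left (hu' x y) (inv_nonneg.2 (le_of_lt htR))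
      rw [← mul_assoc, inv_mul_cancel₀ htR.ne', one_mul] at h2
      exact h2
    have ht0' : (0:ℝ) ≤ t := le_of_lt htR
    nlinarith
  clear_value T N c m t
  refine ⟨privOf P ht0 u v, ?_, ?_⟩
  · -- Computes
    intro x y
    rw [priv_pair P f ht0 u v x y]
    have herr : (∑ z : Fin t × Fin t, ((t:ℝ)⁻¹ * (t:ℝ)⁻¹) * eP P f x y (u z.1) (v z.2))
        = (t:ℝ)⁻¹ * ∑ j, (t:ℝ)⁻¹ * ∑ i, eP P f x y (u i) (v j) := by
      rw [Fintype.sum_prod_type_right]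
      simp only [Finset.mul_sum]
      exact Finset.sum_congr rfl fun j _ => Finset.sum_congr rfl fun i _ => by ring
    rw [herr]
    have h2 := mul_le_mul_of_nonneg_left (hv' x y) (inv_nonneg.2 (le_of_lt htR))
    rw [← mul_assoc, inv_mul_cancel₀ htR.ne', one_mul] at h2
    exact h2
  · -- communication cost
    have hCC : (privOf P ht0 u v).CC = P.CC + 2 * m := by
      unfold PrivSMP.CC ShSMP.CC privOf
      dsimp only
      subst htdef
      rw [ceil_card_prod_fin P.MA m, ceil_card_prod_fin P.MB m]
      push_cast
      ring
    rw [hCC]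
    have hg2 : (2:ℝ) * m ≤ g2 (Real.logb 2 (Fintype.card X))
        (Real.logb 2 (Fintype.card Y)) δ := by
      unfold g2
      rw [← hTdef]
      have hmlog : (m:ℝ) = Real.logb 2 ((2:ℝ) ^ m) := by
        rw [Real.logb_pow, Real.logb_self_eq_one one_lt_two, mul_one]
      have h2t : ((2:ℝ) ^ m) = (t:ℝ) := by rw [htdef]; push_cast; ring
      have hb : ((2:ℝ) ^ m) ≤ 2 * (T + 1) := by rw [h2t]; linarith
      have hlogle : Real.logb 2 ((2:ℝ) ^ m) ≤ Real.logb 2 (2 * (T + 1)) :=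
        Real.logb_le_logb_of_le one_lt_two (by positivity) hb
      have hsplit : Real.logb 2 (2 * (T + 1)) = 1 + Real.logb 2 (T + 1) := by
        rw [Real.logb_mul (by norm_num) (by linarith), Real.logb_self_eq_one one_lt_two]
      linarith
    linarith

end Main

end NewmanAux

end NewmanAux

/-- Newman-type reduction from shared randomness to private coins in
the SMP model. -/
theorem sh_to_priv (X Y : Type) [Fintype X] [Fintype Y] [Nonempty X] [Nonempty Y]
    (f : X → Y → Bool) (ε δ : ℝ) (hε : 0 ≤ ε) (hδ : 0 < δ) (hsum : ε + δ < 1 / 2) :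
    (∀ P : ShSMP X Y Bool, P.Computes f ε →
      ∃ P' : PrivSMP X Y Bool, P'.Computes f (ε + δ) ∧
        P'.CC ≤ P.CC + g2 (Real.logb 2 (Fintype.card X)) (Real.logb 2 (Fintype.card Y)) δ) ∧
    CCprivf f (ε + δ) ≤ CCshf f ε
      + g2 (Real.logb 2 (Fintype.card X)) (Real.logb 2 (Fintype.card Y)) δ := by
  constructor
  · intro P hP
    exact NewmanAux.main_aux f ε δ hε hδ P hP
  · have hbdd : BddBelow {c : ℝ | ∃ P' : PrivSMP X Y Bool, P'.Computes f (ε + δ) ∧ P'.CC = c} := by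
      refine ⟨0, ?_⟩
      rintro c ⟨P', _, rfl⟩
      exact NewmanAux.privCC_nonneg P'
    have hSne : ({c : ℝ | ∃ P : ShSMP X Y Bool, P.Computes f ε ∧ P.CC = c}).Nonempty :=
      ⟨(NewmanAux.trivSh f).CC, NewmanAux.trivSh f, NewmanAux.trivSh_computes f hε, rfl⟩
    have key : ∀ c ∈ {c : ℝ | ∃ P : ShSMP X Y Bool, P.Computes f ε ∧ P.CC = c},
        CCprivf f (ε + δ) ≤ c
          + g2 (Real.logb 2 (Fintype.card X)) (Real.logb 2 (Fintype.card Y)) δ := by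
      rintro c ⟨P, hPc, rfl⟩
      obtain ⟨P', h1, h2⟩ := NewmanAux.main_aux f ε δ hε hδ P hPc
      have hmem : P'.CC ∈ {c : ℝ | ∃ P' : PrivSMP X Y Bool, P'.Computes f (ε + δ) ∧ P'.CC = c} :=
        ⟨P', h1, rfl⟩
      exact le_trans (csInf_le hbdd hmem) h2
    have hfin : CCprivf f (ε + δ)
        - g2 (Real.logb 2 (Fintype.card X)) (Real.logb 2 (Fintype.card Y)) δ
        ≤ sInf {c : ℝ | ∃ P : ShSMP X Y Bool, P.Computes f ε ∧ P.CC = c} :=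
      le_csInf hSne fun c hc => by linarith [key c hc]
    have : CCshf f ε = sInf {c : ℝ | ∃ P : ShSMP X Y Bool, P.Computes f ε ∧ P.CC = c} := rfl
    linarith
end

section
/- Let Π be a private-coin SMP protocol computing a Boolean function f : X × Y → {0,1} with worst-case error at most ε, with message sets M_A, M_B, and let δ > 0 and t = ⌈(log₂|M_B| + 2)/(2δ²·log₂ e)⌉. Then there exists a private-coin SMP protocol Π′ computing f with worst-case error at most ε + δ in which Alice's message is a deterministic function of her input x taking values in M_A^t (so Alice communicates at most ⌈t·log₂|M_A|⌉ bits), Bob sends his message exactly as in Π, and the referee, on Alice's message (m_A¹,…,m_A^t) and Bob's message m_B, outputs 1 with probability (1/t)·Σ_{i=1}^t Pr_{r_C}[Π_C(m_A^i, m_B, r_C) = 1] and 0 otherwise. -/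
open scoped BigOperators
open scoped Classical

open Real

lemma Dpos {p : ℝ} (hp0 : 0 ≤ p) (hp1 : p ≤ 1) (l : ℝ) :
    0 < 1 - p + p * Real.exp l := by
  nlinarith [Real.exp_pos l, mul_nonneg hp0 (Real.exp_pos l).le]

lemma hoeffding_scalar {p : ℝ} (hp0 : 0 ≤ p) (hp1 : p ≤ 1) {l : ℝ} (hl : 0 ≤ l) :
    1 - p + p * Real.exp l ≤ Real.exp (p * l + l ^ 2 / 8) := by
  set D : ℝ → ℝ := fun x => 1 - p + p * Real.exp x with hDdef
  have hD : ∀ x, 0 < D x := fun x => Dpos hp0 hp1 x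
  have hD' : ∀ x, HasDerivAt D (p * Real.exp x) x := fun x =>
    ((Real.hasDerivAt_exp x).const_mul p).const_add (1 - p)
  set ψ : ℝ → ℝ := fun x => p * Real.exp x / D x with hψdef
  have hψ : ∀ x, HasDerivAt ψ (ψ x - ψ x ^ 2) x := by
    intro x
    have h1 : HasDerivAt (fun x => p * Real.exp x) (p * Real.exp x) x :=
      (Real.hasDerivAt_exp x).const_mul p
    have h2 := h1.div (hD' x) (hD x).ne'
    refine h2.congr_deriv ?_
    have hne := (hD x).ne'
    simp only [hψdef]
    field_simp
  have hψ0 : ψ 0 = p := by simp [hψdef, hDdef]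
  set h1 : ℝ → ℝ := fun x => ψ x - p - x / 4 with hh1def
  have hh1 : ∀ x, HasDerivAt h1 (ψ x - ψ x ^ 2 - 1 / 4) x := by
    intro x
    have := ((hψ x).sub_const p).sub ((hasDerivAt_id x).div_const 4)
    exact this
  have hh1le : ∀ x, ψ x - ψ x ^ 2 - 1 / 4 ≤ 0 := fun x => by nlinarith [sq_nonneg (ψ x - 1 / 2)]
  have h1anti : AntitoneOn h1 (Set.Ici (0 : ℝ)) := by
    apply antitoneOn_of_deriv_nonpos (convex_Ici 0)
    · exact fun x _ => (hh1 x).differentiableAt.continuousAt.continuousWithinAt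
    · exact fun x _ => (hh1 x).differentiableAt.differentiableWithinAt
    · intro x _
      rw [(hh1 x).deriv]
      exact hh1le x
  have h1le : ∀ x : ℝ, 0 ≤ x → h1 x ≤ 0 := by
    intro x hx
    have := h1anti Set.self_mem_Ici (Set.mem_Ici.2 hx) hx
    have h10 : h1 0 = 0 := by simp [hh1def, hψ0]
    linarith
  set h : ℝ → ℝ := fun x => Real.log (D x) - p * x - x ^ 2 / 8 with hhdef
  have hh : ∀ x, HasDerivAt h (h1 x) x := by
    intro x
    have hlog : HasDerivAt (fun x => Real.log (D x)) (p * Real.exp x / D x) x :=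
      (hD' x).log (hD x).ne'
    have := (hlog.sub ((hasDerivAt_id x).const_mul p)).sub ((hasDerivAt_pow 2 x).div_const 8)
    refine this.congr_deriv ?_
    simp [hh1def, hψdef]
    ring
  have hanti : AntitoneOn h (Set.Ici (0 : ℝ)) := by
    apply antitoneOn_of_deriv_nonpos (convex_Ici 0)
    · exact fun x _ => (hh x).differentiableAt.continuousAt.continuousWithinAt
    · exact fun x _ => (hh x).differentiableAt.differentiableWithinAt
    · intro x hx
      rw [(hh x).deriv]
      exact h1le x (le_of_lt (by simpa using hx))
  have h0 : h 0 = 0 := by simp [hhdef, hDdef]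
  have hle : h l ≤ 0 := by
    have := hanti Set.self_mem_Ici (Set.mem_Ici.2 hl) hl
    linarith
  have : Real.log (D l) ≤ p * l + l ^ 2 / 8 := by
    simp only [hhdef] at hle; linarith
  exact (Real.log_le_iff_le_exp (hD l)).1 this
open Finset

-- pointwise convexity bound: exp(c*a) ≤ 1 - a + a * exp c for a ∈ [0,1], c real
lemma exp_mul_le {a c : ℝ} (ha0 : 0 ≤ a) (ha1 : a ≤ 1) :
    Real.exp (c * a) ≤ 1 - a + a * Real.exp c := by
  have := convexOn_exp.2 (Set.mem_univ (0 : ℝ)) (Set.mem_univ c)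
    (by linarith : (0:ℝ) ≤ 1 - a) ha0 (by ring)
  simpa [smul_eq_mul, mul_comm] using this

section
variable {M B : Type} [Fintype M] [Fintype B] [Nonempty M]

lemma upper_tail (q : M → ℝ) (hq0 : ∀ m, 0 ≤ q m) (hq1 : ∑ m, q m = 1)
    (a : M → ℝ) (ha0 : ∀ m, 0 ≤ a m) (ha1 : ∀ m, a m ≤ 1)
    (t : ℕ) (δ : ℝ) (hδ : 0 < δ) :
    ∑ v : Fin t → M, (if (t : ℝ) * (∑ m, q m * a m) + t * δ ≤ ∑ i, a (v i) then ∏ i, q (v i) else 0)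
      ≤ Real.exp (-(2 * t * δ ^ 2)) := by
  set p : ℝ := ∑ m, q m * a m with hp
  have hp0 : 0 ≤ p := Finset.sum_nonneg fun m _ => mul_nonneg (hq0 m) (ha0 m)
  have hp1 : p ≤ 1 := by
    calc p ≤ ∑ m, q m := Finset.sum_le_sum fun m _ => by
            nlinarith [hq0 m, ha1 m, ha0 m]
      _ = 1 := hq1
  set c : ℝ := 4 * δ with hc
  have hc0 : 0 ≤ c := by positivity
  -- pointwise bound on indicator
  have key : ∀ v : Fin t → M,
      (if (t : ℝ) * p + t * δ ≤ ∑ i, a (v i) then ∏ i, q (v i) else 0)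
        ≤ Real.exp (-(c * ((t : ℝ) * p + t * δ))) * ∏ i, (q (v i) * Real.exp (c * a (v i))) := by
    intro v
    have hQ0 : 0 ≤ ∏ i, q (v i) := Finset.prod_nonneg fun i _ => hq0 (v i)
    have hprod : ∏ i, (q (v i) * Real.exp (c * a (v i)))
        = (∏ i, q (v i)) * Real.exp (c * ∑ i, a (v i)) := by
      rw [Finset.prod_mul_distrib, ← Real.exp_sum]
      congr 1
      rw [Finset.mul_sum]
    rw [hprod, ← mul_assoc, mul_comm (Real.exp _), mul_assoc, ← Real.exp_add]
    split_ifs with hcond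
    · have : (0:ℝ) ≤ -(c * ((t : ℝ) * p + t * δ)) + c * ∑ i, a (v i) := by nlinarith
      nlinarith [Real.one_le_exp this, hQ0]
    · positivity
  calc ∑ v : Fin t → M, (if (t : ℝ) * p + t * δ ≤ ∑ i, a (v i) then ∏ i, q (v i) else 0)
      ≤ ∑ v : Fin t → M, Real.exp (-(c * ((t : ℝ) * p + t * δ))) *
          ∏ i, (q (v i) * Real.exp (c * a (v i))) := Finset.sum_le_sum fun v _ => key v
    _ = Real.exp (-(c * ((t : ℝ) * p + t * δ))) *
          ∑ v ∈ Fintype.piFinset (fun _ : Fin t => (univ : Finset M)),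
            ∏ i, (q (v i) * Real.exp (c * a (v i))) := by
        rw [← Finset.mul_sum]; rfl
    _ = Real.exp (-(c * ((t : ℝ) * p + t * δ))) * (∑ m, q m * Real.exp (c * a m)) ^ t := by
        rw [Finset.sum_prod_piFinset (univ : Finset M) (fun _ m => q m * Real.exp (c * a m))]
        congr 1
        rw [Finset.prod_const, Finset.card_univ, Fintype.card_fin]
    _ ≤ Real.exp (-(c * ((t : ℝ) * p + t * δ))) * Real.exp (p * c + c ^ 2 / 8) ^ t := by
        apply mul_le_mul_of_nonneg_left _ (Real.exp_pos _).le
        apply pow_le_pow_left₀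
        · exact Finset.sum_nonneg fun m _ => mul_nonneg (hq0 m) (Real.exp_pos _).le
        · calc ∑ m, q m * Real.exp (c * a m)
              ≤ ∑ m, q m * (1 - a m + a m * Real.exp c) := Finset.sum_le_sum fun m _ =>
                mul_le_mul_of_nonneg_left (exp_mul_le (ha0 m) (ha1 m)) (hq0 m)
            _ = 1 - p + p * Real.exp c := by
                have he : ∀ m, q m * (1 - a m + a m * Real.exp c)
                    = q m - q m * a m + q m * a m * Real.exp c := fun m => by ring
                simp_rw [he, Finset.sum_add_distrib, Finset.sum_sub_distrib, hq1,
                  ← Finset.sum_mul]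
                rfl
            _ ≤ Real.exp (p * c + c ^ 2 / 8) := hoeffding_scalar hp0 hp1 hc0
    _ ≤ Real.exp (-(2 * t * δ ^ 2)) := by
        rw [← Real.exp_nat_mul, ← Real.exp_add, Real.exp_le_exp, hc]
        apply le_of_eq
        ring
end

section
variable {M B : Type} [Fintype M] [Fintype B] [Nonempty M]

lemma exists_good_tuple (q : M → ℝ) (hq0 : ∀ m, 0 ≤ q m) (hq1 : ∑ m, q m = 1)
    (a : M → B → ℝ) (ha0 : ∀ m b, 0 ≤ a m b) (ha1 : ∀ m b, a m b ≤ 1)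
    (t : ℕ) (ht : 0 < t) (δ : ℝ) (hδ : 0 < δ)
    (hcard : (Fintype.card B : ℝ) * (2 * Real.exp (-(2 * t * δ ^ 2))) ≤ 1 / 2) :
    ∃ v : Fin t → M, ∀ b, |(1 / (t : ℝ)) * ∑ i, a (v i) b - ∑ m, q m * a m b| ≤ δ := by
  by_contra hcon
  push_neg at hcon
  set Q : (Fin t → M) → ℝ := fun v => ∏ i, q (v i) with hQ
  have hQ0 : ∀ v, 0 ≤ Q v := fun v => Finset.prod_nonneg fun i _ => hq0 (v i)
  have hQ1 : ∑ v : Fin t → M, Q v = 1 := by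
    rw [hQ, ← Fintype.piFinset_univ,
      Finset.sum_prod_piFinset (univ : Finset M) (fun (_ : Fin t) m => q m), hq1]
    simp
  have htR : (0:ℝ) < t := by exact_mod_cast ht
  set p : B → ℝ := fun b => ∑ m, q m * a m b with hp
  have up : ∀ b, ∑ v : Fin t → M,
      (if (t:ℝ) * p b + t * δ ≤ ∑ i, a (v i) b then Q v else 0) ≤ Real.exp (-(2 * t * δ ^ 2)) :=
    fun b => upper_tail q hq0 hq1 (fun m => a m b) (fun m => ha0 m b) (fun m => ha1 m b) t δ hδ
  have dn : ∀ b, ∑ v : Fin t → M,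
      (if (t:ℝ) * (∑ m, q m * (1 - a m b)) + t * δ ≤ ∑ i, (1 - a (v i) b) then Q v else 0)
        ≤ Real.exp (-(2 * t * δ ^ 2)) :=
    fun b => upper_tail q hq0 hq1 (fun m => 1 - a m b)
      (fun m => show (0:ℝ) ≤ 1 - a m b by linarith [ha1 m b])
      (fun m => show (1:ℝ) - a m b ≤ 1 by linarith [ha0 m b]) t δ hδ
  have hsum1 : ∀ b, (∑ m, q m * (1 - a m b)) = 1 - p b := by
    intro b
    simp_rw [mul_sub, mul_one, Finset.sum_sub_distrib, hq1]
    rfl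
  have hsumS : ∀ (v : Fin t → M) b, (∑ i, (1 - a (v i) b)) = (t:ℝ) - ∑ i, a (v i) b := by
    intro v b
    rw [Finset.sum_sub_distrib, Finset.sum_const, Finset.card_univ, Fintype.card_fin]
    simp
  have pointwise : ∀ v : Fin t → M, Q v ≤ ∑ b : B,
      ((if (t:ℝ) * p b + t * δ ≤ ∑ i, a (v i) b then Q v else 0)
        + (if (t:ℝ) * (∑ m, q m * (1 - a m b)) + t * δ ≤ ∑ i, (1 - a (v i) b) then Q v else 0)) := by
    intro v
    obtain ⟨b, hb⟩ := hcon v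
    have hnn : ∀ b' : B, (0:ℝ) ≤
        ((if (t:ℝ) * p b' + t * δ ≤ ∑ i, a (v i) b' then Q v else 0)
          + (if (t:ℝ) * (∑ m, q m * (1 - a m b')) + t * δ ≤ ∑ i, (1 - a (v i) b') then Q v else 0)) := by
      intro b'
      have := hQ0 v
      positivity
    refine le_trans ?_ (Finset.single_le_sum (fun b' _ => hnn b') (Finset.mem_univ b))
    rcases lt_or_ge ((1 / (t : ℝ)) * ∑ i, a (v i) b) (p b) with hcase | hcase
    · -- lower deviation : p b - avg > δ
      have habs : p b - (1 / (t:ℝ)) * ∑ i, a (v i) b > δ := by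
        rw [abs_sub_comm, abs_of_pos (by linarith)] at hb
        exact hb
      have hcond : (t:ℝ) * (∑ m, q m * (1 - a m b)) + t * δ ≤ ∑ i, (1 - a (v i) b) := by
        rw [hsum1 b, hsumS v b]
        have h2 : (t:ℝ) * ((1 / (t:ℝ)) * ∑ i, a (v i) b) = ∑ i, a (v i) b := by
          field_simp
        nlinarith
      rw [if_pos hcond]
      have h3 : (0:ℝ) ≤ (if (t:ℝ) * p b + t * δ ≤ ∑ i, a (v i) b then Q v else 0) := by
        have := hQ0 v; positivity
      linarith
    · -- upper deviation
      have habs : (1 / (t:ℝ)) * ∑ i, a (v i) b - p b > δ := by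
        rw [abs_of_nonneg (by linarith)] at hb
        exact hb
      have hcond : (t:ℝ) * p b + t * δ ≤ ∑ i, a (v i) b := by
        have h2 : (t:ℝ) * ((1 / (t:ℝ)) * ∑ i, a (v i) b) = ∑ i, a (v i) b := by
          field_simp
        nlinarith
      rw [if_pos hcond]
      have h3 : (0:ℝ) ≤ (if (t:ℝ) * (∑ m, q m * (1 - a m b)) + t * δ ≤ ∑ i, (1 - a (v i) b)
          then Q v else 0) := by
        have := hQ0 v; positivity
      linarith
  have total : (1:ℝ) ≤ 1 / 2 := by
    calc (1:ℝ) = ∑ v : Fin t → M, Q v := hQ1.symm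
      _ ≤ ∑ v : Fin t → M, ∑ b : B,
          ((if (t:ℝ) * p b + t * δ ≤ ∑ i, a (v i) b then Q v else 0)
            + (if (t:ℝ) * (∑ m, q m * (1 - a m b)) + t * δ ≤ ∑ i, (1 - a (v i) b) then Q v else 0)) :=
          Finset.sum_le_sum fun v _ => pointwise v
      _ = ∑ b : B, ∑ v : Fin t → M,
          ((if (t:ℝ) * p b + t * δ ≤ ∑ i, a (v i) b then Q v else 0)
            + (if (t:ℝ) * (∑ m, q m * (1 - a m b)) + t * δ ≤ ∑ i, (1 - a (v i) b) then Q v else 0)) :=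
          Finset.sum_comm
      _ ≤ ∑ b : B, (2 * Real.exp (-(2 * t * δ ^ 2))) := by
          apply Finset.sum_le_sum
          intro b _
          rw [Finset.sum_add_distrib]
          have := up b
          have := dn b
          linarith
      _ = (Fintype.card B : ℝ) * (2 * Real.exp (-(2 * t * δ ^ 2))) := by
          rw [Finset.sum_const, Finset.card_univ, nsmul_eq_mul]
      _ ≤ 1 / 2 := hcard
  linarith
end

noncomputable section DerandAux

namespace DerandAux

open Finset

variable {X Y : Type} [Fintype X] [Fintype Y]

/-- Referee acceptance probability given messages. -/
def gP (P : PrivSMP X Y Bool) (m : P.MA) (mB : P.MB) : ℝ :=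
  FinDist.probEvent P.dRC (fun rC => P.pC m mB rC = true)

/-- Distribution of Alice's message on input x. -/
def qP (P : PrivSMP X Y Bool) (x : X) (m : P.MA) : ℝ :=
  FinDist.probVal P.dRA (P.pA x) m

lemma gP_nonneg (P : PrivSMP X Y Bool) (m : P.MA) (mB : P.MB) : 0 ≤ gP P m mB := by
  unfold gP FinDist.probEvent
  apply Finset.sum_nonneg
  intro rC _
  split_ifs
  · exact P.dRC.nonneg rC
  · exact le_rfl

lemma gP_le_one (P : PrivSMP X Y Bool) (m : P.MA) (mB : P.MB) : gP P m mB ≤ 1 := by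
  unfold gP FinDist.probEvent
  rw [← P.dRC.sum_one]
  apply Finset.sum_le_sum
  intro rC _
  split_ifs
  · exact le_rfl
  · exact P.dRC.nonneg rC

lemma qP_nonneg (P : PrivSMP X Y Bool) (x : X) (m : P.MA) : 0 ≤ qP P x m := by
  unfold qP FinDist.probVal FinDist.probEvent
  apply Finset.sum_nonneg
  intro rA _
  split_ifs
  · exact P.dRA.nonneg rA
  · exact le_rfl

lemma qP_sum_mul (P : PrivSMP X Y Bool) (x : X) (F : P.MA → ℝ) :
    ∑ m, qP P x m * F m = ∑ rA, P.dRA.prob rA * F (P.pA x rA) := by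
  unfold qP FinDist.probVal FinDist.probEvent
  simp only [Finset.sum_mul, ite_mul, zero_mul]
  rw [Finset.sum_comm]
  refine Finset.sum_congr rfl fun rA _ => ?_
  simp [Finset.sum_ite_eq]

lemma qP_sum_one (P : PrivSMP X Y Bool) (x : X) : ∑ m, qP P x m = 1 := by
  have := qP_sum_mul P x (fun _ => (1:ℝ))
  simpa [P.dRA.sum_one] using this

/-- True acceptance probability of the protocol on input (x,y). -/
def AccP (P : PrivSMP X Y Bool) (x : X) (y : Y) : ℝ :=
  ∑ rB, P.dRB.prob rB * ∑ m, qP P x m * gP P m (P.pB y rB)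

lemma acc_sum (P : PrivSMP X Y Bool) (f : X → Y → Bool) (x : X) (y : Y) :
    (∑ r : P.RA × P.RB × P.RC,
        if P.pC (P.pA x r.1) (P.pB y r.2.1) r.2.2 = true then P.randDist.prob r else 0)
      = AccP P x y := by
  have hstep : (∑ r : P.RA × P.RB × P.RC,
        if P.pC (P.pA x r.1) (P.pB y r.2.1) r.2.2 = true then P.randDist.prob r else 0)
      = ∑ rA, ∑ rB, P.dRA.prob rA * (P.dRB.prob rB * gP P (P.pA x rA) (P.pB y rB)) := by
    rw [Fintype.sum_prod_type]
    refine Finset.sum_congr rfl fun rA _ => ?_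
    rw [Fintype.sum_prod_type]
    refine Finset.sum_congr rfl fun rB _ => ?_
    unfold gP FinDist.probEvent
    rw [Finset.mul_sum, Finset.mul_sum]
    refine Finset.sum_congr rfl fun rC _ => ?_
    have : P.randDist.prob (rA, rB, rC)
        = P.dRA.prob rA * (P.dRB.prob rB * P.dRC.prob rC) := rfl
    rw [this]
    split_ifs <;> ring
  rw [hstep, Finset.sum_comm]
  unfold AccP
  refine Finset.sum_congr rfl fun rB _ => ?_
  rw [qP_sum_mul, Finset.mul_sum]
  refine Finset.sum_congr rfl fun rA _ => by ring

lemma err_eq (P : PrivSMP X Y Bool) (f : X → Y → Bool) (x : X) (y : Y) :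
    P.err f x y = if f x y = true then 1 - AccP P x y else AccP P x y := by
  simp only [PrivSMP.err, FinDist.probEvent]
  cases hf : f x y with
  | true =>
    rw [if_pos rfl, ← acc_sum P f x y, ← P.randDist.sum_one, ← Finset.sum_sub_distrib]
    refine Finset.sum_congr rfl fun r _ => ?_
    rcases Bool.eq_false_or_eq_true (P.pC (P.pA x r.1) (P.pB y r.2.1) r.2.2) with h | h <;>
      simp [h]
  | false =>
    rw [if_neg (by simp : ¬(false = true)), ← acc_sum P f x y]
    refine Finset.sum_congr rfl fun r _ => ?_
    rcases Bool.eq_false_or_eq_true (P.pC (P.pA x r.1) (P.pB y r.2.1) r.2.2) with h | h <;>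
      simp [h]

end DerandAux

end DerandAux

/-- Derandomization of Alice: from any private-coin SMP protocol
with error ε one obtains, for t = ⌈(log₂|M_B| + 2)/(2δ²·log₂e)⌉, a protocol with
error ε + δ in which Alice deterministically sends a t-tuple of messages from M_A,
Bob sends his message exactly as in Π, and the referee outputs 1 with probability
(1/t)·Σᵢ Pr_{r_C}[Π_C(m_Aⁱ, m_B, r_C) = 1]. -/
theorem derandomize_alice (X Y : Type) [Fintype X] [Fintype Y] [Nonempty X] [Nonempty Y]
    (f : X → Y → Bool) (ε δ : ℝ) (hδ : 0 < δ)
    (P : PrivSMP X Y Bool) (hP : P.Computes f ε)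
    (t : ℕ) (ht : t = ⌈(Real.logb 2 (Fintype.card P.MB) + 2) / (2 * δ ^ 2 * log2e)⌉₊) :
    ∃ mA : X → Fin t → P.MA, ∀ x y,
      (if f x y = true
        then 1 - ∑ rB : P.RB, P.dRB.prob rB * ((1 / (t : ℝ)) * ∑ i : Fin t,
          FinDist.probEvent P.dRC (fun rC => P.pC (mA x i) (P.pB y rB) rC = true))
        else ∑ rB : P.RB, P.dRB.prob rB * ((1 / (t : ℝ)) * ∑ i : Fin t,
          FinDist.probEvent P.dRC (fun rC => P.pC (mA x i) (P.pB y rB) rC = true)))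
      ≤ ε + δ := by
  classical
  have hc1 : (1:ℝ) ≤ (Fintype.card P.MB : ℝ) := by
    have h := Fintype.card_pos (α := P.MB)
    exact_mod_cast h
  have hc0 : (0:ℝ) < (Fintype.card P.MB : ℝ) := lt_of_lt_of_le one_pos hc1
  set c : ℝ := (Fintype.card P.MB : ℝ) with hcdef
  have hlog2 : (0:ℝ) < Real.log 2 := Real.log_pos (by norm_num)
  have hl2e : log2e = 1 / Real.log 2 := by
    rw [log2e, Real.logb, Real.log_exp]
  have hl2e0 : 0 < log2e := by rw [hl2e]; positivity
  have hrpos : 0 < (Real.logb 2 c + 2) / (2 * δ ^ 2 * log2e) := by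
    apply div_pos
    · have : 0 ≤ Real.logb 2 c := Real.logb_nonneg (by norm_num) hc1
      linarith
    · positivity
  have ht0 : 0 < t := by
    rw [ht]
    exact Nat.ceil_pos.2 hrpos
  have htr : (Real.logb 2 c + 2) / (2 * δ ^ 2 * log2e) ≤ (t:ℝ) := by
    rw [ht]; exact Nat.le_ceil _
  have h1 : Real.logb 2 c + 2 ≤ (t:ℝ) * (2 * δ ^ 2 * log2e) :=
    (div_le_iff₀ (by positivity)).1 htr
  have hexp : Real.log c + 2 * Real.log 2 ≤ 2 * (t:ℝ) * δ ^ 2 := by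
    have h2 := mul_le_mul_of_nonneg_right h1 hlog2.le
    have h3 : (Real.logb 2 c + 2) * Real.log 2 = Real.log c + 2 * Real.log 2 := by
      rw [Real.logb]
      field_simp
    have h4 : ((t:ℝ) * (2 * δ ^ 2 * log2e)) * Real.log 2 = 2 * (t:ℝ) * δ ^ 2 := by
      rw [hl2e]
      field_simp
    rw [h3, h4] at h2
    exact h2
  have hstep : Real.exp (-(2 * (t:ℝ) * δ ^ 2)) ≤ 1 / (4 * c) := by
    have he2 : Real.exp (2 * Real.log 2) = 4 := by
      rw [two_mul, Real.exp_add, Real.exp_log (by norm_num : (0:ℝ) < 2)]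
      norm_num
    have h4 : Real.exp (-(Real.log c + 2 * Real.log 2)) = 1 / (4 * c) := by
      rw [Real.exp_neg, Real.exp_add, Real.exp_log hc0, he2, mul_comm, one_div]
    calc Real.exp (-(2 * (t:ℝ) * δ ^ 2)) ≤ Real.exp (-(Real.log c + 2 * Real.log 2)) :=
          Real.exp_le_exp.2 (by linarith)
      _ = 1 / (4 * c) := h4
  have hcard : c * (2 * Real.exp (-(2 * (t:ℝ) * δ ^ 2))) ≤ 1 / 2 := by
    calc c * (2 * Real.exp (-(2 * (t:ℝ) * δ ^ 2)))
        ≤ c * (2 * (1 / (4 * c))) := by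
          apply mul_le_mul_of_nonneg_left _ hc0.le
          linarith
      _ = 1 / 2 := by
          field_simp
          ring
  have hex : ∀ x : X, ∃ v : Fin t → P.MA, ∀ b : P.MB,
      |(1 / (t : ℝ)) * ∑ i, DerandAux.gP P (v i) b
        - ∑ m, DerandAux.qP P x m * DerandAux.gP P m b| ≤ δ := by
    intro x
    exact exists_good_tuple (DerandAux.qP P x) (DerandAux.qP_nonneg P x)
      (DerandAux.qP_sum_one P x) (DerandAux.gP P) (DerandAux.gP_nonneg P)
      (DerandAux.gP_le_one P) t ht0 δ hδ hcard
  choose v hv using hex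
  refine ⟨v, ?_⟩
  intro x y
  have herr := hP x y
  rw [DerandAux.err_eq P f x y] at herr
  have hdiff : |(∑ rB : P.RB, P.dRB.prob rB * ((1 / (t : ℝ)) * ∑ i : Fin t,
      DerandAux.gP P (v x i) (P.pB y rB))) - DerandAux.AccP P x y| ≤ δ := by
    unfold DerandAux.AccP
    rw [← Finset.sum_sub_distrib]
    refine le_trans (Finset.abs_sum_le_sum_abs _ _) ?_
    refine le_trans (Finset.sum_le_sum (fun rB _ => ?_))
      (le_of_eq (by rw [← Finset.sum_mul, P.dRB.sum_one, one_mul]))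
    rw [← mul_sub, abs_mul, abs_of_nonneg (P.dRB.nonneg rB)]
    exact mul_le_mul_of_nonneg_left (hv x (P.pB y rB)) (P.dRB.nonneg rB)
  have hgoal : (if f x y = true
      then 1 - ∑ rB : P.RB, P.dRB.prob rB * ((1 / (t : ℝ)) * ∑ i : Fin t,
        DerandAux.gP P (v x i) (P.pB y rB))
      else ∑ rB : P.RB, P.dRB.prob rB * ((1 / (t : ℝ)) * ∑ i : Fin t,
        DerandAux.gP P (v x i) (P.pB y rB))) ≤ ε + δ := by
    rcases abs_le.1 hdiff with ⟨hd1, hd2⟩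
    by_cases hf : f x y = true
    · rw [if_pos hf] at herr ⊢
      linarith
    · rw [if_neg hf] at herr ⊢
      linarith
  exact hgoal
end
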